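/- arXiv:1602.02486 — 13 statements merged into one kernel-verified Lean document; each statement's English description precedes it below -/
import Mathlib

section
/- Let X be a Hausdorff locally convex topological vector space, V ⊆ X a convex set, and U ⊆ V a self-segment-dense set in V (i.e., U is dense in V and for all x, y ∈ U the set [x,y] ∩ U is dense in the segment [x,y]). Then for every finite subset {u₁,...,uₙ} ⊆ U, the closure of (conv{u₁,...,uₙ} ∩ U) equals conv{u₁,...,uₙ}. -/
theorem aux_conv_subset_closure
    {X : Type*} [AddCommGroup X] [Module ℝ X] [TopologicalSpace X]
    [IsTopologicalAddGroup X] [ContinuousSMul ℝ X]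
    (U : Set X)
    (hssd : ∀ x ∈ U, ∀ y ∈ U, segment ℝ x y ⊆ closure (segment ℝ x y ∩ U))
    (s : Finset X) (hs : ↑s ⊆ U) :
    (convexHull ℝ (↑s : Set X)) ⊆ closure (convexHull ℝ (↑s : Set X) ∩ U) := by
  classical
  induction s using Finset.induction_on with
  | empty => simp
  | @insert a t ha ih =>
    intro x hx
    rcases t.eq_empty_or_nonempty with rfl | hne
    · have hx' : x = a := by simpa using hx
      subst hx'
      exact subset_closure ⟨hx, hs (by simp)⟩
    · have haU : a ∈ U := hs (by simp)
      have htU : ↑t ⊆ U := fun z hz => hs (by simp [hz])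
      have htne : (↑t : Set X).Nonempty := Finset.coe_nonempty.mpr hne
      rw [Finset.coe_insert, convexHull_insert htne] at hx
      rw [mem_convexJoin] at hx
      rcases hx with ⟨a', ha', y, hy, hxy⟩
      rw [Set.mem_singleton_iff] at ha'
      subst a'
      rcases hxy with ⟨t₁, t₂, h1, h2, h12, rfl⟩
      have hyc : y ∈ closure ((convexHull ℝ (↑t : Set X)) ∩ U) := ih htU hy
      set f : X → X := fun z => t₁ • a + t₂ • z with hf
      have hcont : Continuous f := continuous_const.add (continuous_id.const_smul t₂)
      have hconv : Convex ℝ (convexHull ℝ (↑(insert a t) : Set X)) := convex_convexHull ℝ _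
      have hainc : a ∈ convexHull ℝ (↑(insert a t) : Set X) :=
        subset_convexHull ℝ _ (by simp)
      have htinc : convexHull ℝ (↑t : Set X) ⊆ convexHull ℝ (↑(insert a t) : Set X) :=
        convexHull_mono (by simp [Set.subset_insert])
      have hmaps : Set.MapsTo f ((convexHull ℝ (↑t : Set X)) ∩ U)
          (closure (convexHull ℝ (↑(insert a t) : Set X) ∩ U)) := by
        intro z hz
        have hseg : f z ∈ segment ℝ a z := ⟨t₁, t₂, h1, h2, h12, rfl⟩
        refine closure_mono ?_ (hssd a haU z hz.2 hseg)
        intro w hw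
        exact ⟨hconv.segment_subset hainc (htinc hz.1) hw.1, hw.2⟩
      have := map_mem_closure hcont hyc hmaps
      simpa using this
  
/-- Lemma 2.3 (Lemma 2.1 of [LaVi1]): if `U` is self-segment-dense in the convex set `V`
of a real Hausdorff locally convex topological vector space, then for every finite subset
`{u₁,…,uₙ} ⊆ U` one has `cl(conv{u₁,…,uₙ} ∩ U) = conv{u₁,…,uₙ}`. -/
theorem closure_convexHull_finset_inter_of_selfSegmentDense
    {X : Type*} [AddCommGroup X] [Module ℝ X] [TopologicalSpace X]
    [IsTopologicalAddGroup X] [ContinuousSMul ℝ X] [LocallyConvexSpace ℝ X] [T2Space X]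
    (V U : Set X) (hV : Convex ℝ V) (hUV : U ⊆ V) (hdense : V ⊆ closure U)
    (hssd : ∀ x ∈ U, ∀ y ∈ U, segment ℝ x y ⊆ closure (segment ℝ x y ∩ U))
    (s : Finset X) (hs : ↑s ⊆ U) :
    closure (convexHull ℝ (↑s : Set X) ∩ U) = convexHull ℝ (↑s : Set X) := by
  apply subset_antisymm
  · have hclosed : IsClosed (convexHull ℝ (↑s : Set X)) :=
      (s.finite_toSet.isCompact_convexHull (𝕜 := ℝ)).isClosed
    exact hclosed.closure_subset_iff.mpr Set.inter_subset_left
  · exact aux_conv_subset_closure U hssd s hs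
end

section
/- Let X be a Hausdorff locally convex topological vector space, V ⊆ X a convex set, and U ⊆ V self-segment-dense in V. Then for every subset S ⊆ U, the closure of (conv(S) ∩ U) equals the closed convex hull of S. In particular, conv(S) ∩ U is self-segment-dense in conv(S). -/
/-- Lemma 2.4: if `U` is self-segment-dense in the convex set `V`, then for every
`S ⊆ U` one has `cl(conv(S) ∩ U) = cl(conv(S))` (the closed convex hull of `S`);
in particular `conv(S) ∩ U` is self-segment-dense in `conv(S)`. -/
theorem closure_convexHull_inter_of_selfSegmentDense
    {X : Type*} [AddCommGroup X] [Module ℝ X] [TopologicalSpace X]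
    [IsTopologicalAddGroup X] [ContinuousSMul ℝ X] [LocallyConvexSpace ℝ X] [T2Space X]
    (V U : Set X) (hV : Convex ℝ V) (hUV : U ⊆ V) (hdense : V ⊆ closure U)
    (hssd : ∀ x ∈ U, ∀ y ∈ U, segment ℝ x y ⊆ closure (segment ℝ x y ∩ U))
    (S : Set X) (hS : S ⊆ U) :
    closure (convexHull ℝ S ∩ U) = closure (convexHull ℝ S) ∧
      ((convexHull ℝ S ∩ U ⊆ convexHull ℝ S) ∧
        (convexHull ℝ S ⊆ closure (convexHull ℝ S ∩ U)) ∧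
        ∀ x ∈ convexHull ℝ S ∩ U, ∀ y ∈ convexHull ℝ S ∩ U,
          segment ℝ x y ⊆ closure (segment ℝ x y ∩ (convexHull ℝ S ∩ U))) := by
  set C : Set X := convexHull ℝ S ∩ U with hC
  set A : Set X := closure C with hA
  -- Step 1: segments between points of C lie in A
  have step1 : ∀ x ∈ C, ∀ y ∈ C, segment ℝ x y ⊆ A := by
    intro x hx y hy
    have hsub : segment ℝ x y ∩ U ⊆ C := by
      intro z ⟨hz1, hz2⟩
      exact ⟨(convex_convexHull ℝ S).segment_subset hx.1 hy.1 hz1, hz2⟩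
    calc segment ℝ x y ⊆ closure (segment ℝ x y ∩ U) := hssd x hx.2 y hy.2
      _ ⊆ closure C := closure_mono (fun z hz => hsub hz)
  -- Step 2: segments from a point of C to a point of A lie in A
  have step2 : ∀ x ∈ C, ∀ w ∈ A, ∀ a b : ℝ, 0 ≤ a → 0 ≤ b → a + b = 1 →
      a • x + b • w ∈ A := by
    intro x hx w hw a b ha hb hab
    have hcont : Continuous (fun t : X => a • x + b • t) := by fun_prop
    have hmaps : Set.MapsTo (fun t : X => a • x + b • t) C A := by
      intro u hu
      exact step1 x hx u hu ⟨a, b, ha, hb, hab, rfl⟩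
    have := map_mem_closure hcont hw hmaps
    simpa [hA, closure_closure] using this
  -- Step 3: A is convex
  have hconvA : Convex ℝ A := by
    intro p hp q hq a b ha hb hab
    have hcont : Continuous (fun t : X => a • t + b • q) := by fun_prop
    have hmaps : Set.MapsTo (fun t : X => a • t + b • q) C A := by
      intro u hu
      exact step2 u hu q hq a b ha hb hab
    have := map_mem_closure hcont hp hmaps
    simpa [hA, closure_closure] using this
  have hSC : S ⊆ C := fun s hs => ⟨subset_convexHull ℝ S hs, hS hs⟩
  have hmain : convexHull ℝ S ⊆ A := by
    have := convexHull_min (Set.Subset.trans hSC subset_closure) hconvA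
    simpa [hA, closure_closure] using this
  refine ⟨?_, Set.inter_subset_left, hmain, ?_⟩
  · apply Set.Subset.antisymm (closure_mono Set.inter_subset_left)
    calc closure (convexHull ℝ S) ⊆ closure A := closure_mono hmain
      _ = A := closure_closure
  · intro x hx y hy
    have hsub : segment ℝ x y ∩ U ⊆ segment ℝ x y ∩ C := by
      intro z ⟨hz1, hz2⟩
      exact ⟨hz1, (convex_convexHull ℝ S).segment_subset hx.1 hy.1 hz1, hz2⟩
    exact (hssd x hx.2 y hy.2).trans (closure_mono hsub)
end

section
/- Let X be a Hausdorff locally convex topological vector space, V ⊆ X a closed set, and U ⊆ V a set dense in V such that for all u, v ∈ U the set [u,v] ∩ U is dense in [u,v]. Then V is convex (hence U is self-segment-dense in V). -/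
/-- Lemma 2.6: if `V` is closed, `U ⊆ V` is dense in `V`, and for all `u, v ∈ U` the
set `[u,v] ∩ U` is dense in `[u,v]`, then `V` is convex (hence `U` is actually
self-segment-dense in `V`). -/
theorem convex_of_closed_of_segment_dense
    {X : Type*} [AddCommGroup X] [Module ℝ X] [TopologicalSpace X]
    [IsTopologicalAddGroup X] [ContinuousSMul ℝ X] [LocallyConvexSpace ℝ X] [T2Space X]
    (V U : Set X) (hVcl : IsClosed V) (hUV : U ⊆ V) (hdense : V ⊆ closure U)
    (hssd : ∀ u ∈ U, ∀ v ∈ U, segment ℝ u v ⊆ closure (segment ℝ u v ∩ U)) :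
    Convex ℝ V := by
  have hclU : closure U ⊆ V := closure_minimal hUV hVcl
  intro x hx y hy a b ha hb hab
  have hf : Continuous fun p : X × X => a • p.1 + b • p.2 := ((continuous_fst.const_smul a).add (continuous_snd.const_smul b))
  have hmem : (x, y) ∈ closure (U ×ˢ U) := by
    rw [closure_prod_eq]
    exact ⟨hdense hx, hdense hy⟩
  have hmaps : Set.MapsTo (fun p : X × X => a • p.1 + b • p.2) (U ×ˢ U) V := by
    rintro ⟨u, v⟩ ⟨hu, hv⟩
    have hseg : a • u + b • v ∈ segment ℝ u v := ⟨a, b, ha, hb, hab, rfl⟩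
    have := hssd u hu v hv hseg
    exact hclU (closure_mono (Set.inter_subset_right) this)
  have := map_mem_closure hf hmem hmaps
  rwa [hVcl.closure_eq] at this
end

section
/- In an infinite-dimensional real Hilbert space X, the unit sphere U = {x : ‖x‖ = 1} is dense in the closed unit ball B = {x : ‖x‖ ≤ 1} with respect to the weak topology, but U is not self-segment-dense in B: for any x with ‖x‖ = 1, the segment [−x, x] intersects U exactly in {−x, x}. -/
/-- In an infinite-dimensional space, finitely many functionals have a common
nonzero kernel element. -/
lemma exists_ne_zero_forall_eq_zero
    {X : Type*} [NormedAddCommGroup X] [NormedSpace ℝ X]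
    (hinf : ¬ FiniteDimensional ℝ X) (I : Finset (X →L[ℝ] ℝ)) :
    ∃ z : X, z ≠ 0 ∧ ∀ f ∈ I, f z = 0 := by
  by_contra h
  push_neg at h
  set φ : X →ₗ[ℝ] (I → ℝ) := LinearMap.pi (fun i => (i.1 : X →ₗ[ℝ] ℝ)) with hφ
  have hinj : Function.Injective φ := by
    rw [← LinearMap.ker_eq_bot, LinearMap.ker_eq_bot']
    intro m hm
    by_contra hm0
    obtain ⟨f, hfI, hf⟩ := h m hm0
    have := congrFun hm ⟨f, hfI⟩
    exact hf this
  exact hinf (FiniteDimensional.of_injective φ hinj)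

/-- IVT: from inside the ball one can reach the sphere along any nonzero direction. -/
lemma exists_norm_add_smul_eq_one
    {X : Type*} [NormedAddCommGroup X] [NormedSpace ℝ X]
    (y z : X) (hy : ‖y‖ ≤ 1) (hz : z ≠ 0) :
    ∃ t : ℝ, ‖y + t • z‖ = 1 := by
  set T : ℝ := (1 + ‖y‖) / ‖z‖ with hT
  have hz' : (0:ℝ) < ‖z‖ := norm_pos_iff.mpr hz
  have hT0 : 0 ≤ T := div_nonneg (by positivity) hz'.le
  have hcont : ContinuousOn (fun t : ℝ => ‖y + t • z‖) (Set.Icc 0 T) := by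
    fun_prop
  have h1 : 1 ∈ Set.Icc (‖y + (0:ℝ) • z‖) (‖y + T • z‖) := by
    constructor
    · simpa using hy
    · have hle : ‖T • z‖ ≤ ‖y + T • z‖ + ‖y‖ := by
        calc ‖T • z‖ = ‖y + T • z - y‖ := by rw [add_sub_cancel_left]
          _ ≤ ‖y + T • z‖ + ‖y‖ := norm_sub_le _ _
      have hTz : ‖T • z‖ = 1 + ‖y‖ := by
        rw [norm_smul, Real.norm_eq_abs, abs_of_nonneg hT0, hT,
          div_mul_cancel₀ _ hz'.ne']
      linarith
  obtain ⟨t, _, ht⟩ := intermediate_value_Icc hT0 hcont h1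
  exact ⟨t, ht⟩

/-- Example 2.5: in an infinite-dimensional real Hilbert space, the unit sphere `U` is
dense in the closed unit ball `B` for the weak topology, but `U` is not self-segment-
dense in `B`: for any `x` with `‖x‖ = 1`, the segment `[-x, x]` meets `U` exactly
in `{-x, x}`. -/
theorem sphere_weakly_dense_not_selfSegmentDense
    {X : Type*} [NormedAddCommGroup X] [InnerProductSpace ℝ X] [CompleteSpace X]
    (hinf : ¬ FiniteDimensional ℝ X) :
    (toWeakSpace ℝ X '' {x : X | ‖x‖ ≤ 1} ⊆
        closure (toWeakSpace ℝ X '' {x : X | ‖x‖ = 1})) ∧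
      ∀ x : X, ‖x‖ = 1 →
        segment ℝ (-x) x ∩ {z : X | ‖z‖ = 1} = {-x, x} := by
  constructor
  · rintro _ ⟨y, hy, rfl⟩
    rw [mem_closure_iff]
    intro O hO hyO
    change @IsOpen _ (TopologicalSpace.induced (fun (x : WeakSpace ℝ X) (f : X →L[ℝ] ℝ) => f x) Pi.topologicalSpace) O at hO
    rw [isOpen_induced_iff (f := fun (x : WeakSpace ℝ X) (f : X →L[ℝ] ℝ) => f x)] at hO
    obtain ⟨s, hs, rfl⟩ := hO
    obtain ⟨I, u, hu, hsub⟩ := (isOpen_pi_iff.mp hs) _ hyO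
    obtain ⟨z, hz0, hz⟩ := exists_ne_zero_forall_eq_zero hinf I
    obtain ⟨t, ht⟩ := exists_norm_add_smul_eq_one y z hy hz0
    refine ⟨toWeakSpace ℝ X (y + t • z), hsub ?_, ⟨y + t • z, ht, rfl⟩⟩
    intro f hf
    have : f (y + t • z) = f y := by
      rw [map_add, map_smul, hz f hf, smul_zero, add_zero]
    show f (y + t • z) ∈ u f
    rw [this]
    exact (hu f hf).2
  · intro x hx
    ext z
    simp only [Set.mem_inter_iff, Set.mem_setOf_eq, Set.mem_insert_iff,
      Set.mem_singleton_iff]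
    constructor
    · rintro ⟨⟨a, b, ha, hb, hab, rfl⟩, hz⟩
      have hzx : a • (-x) + b • x = (b - a) • x := by
        rw [smul_neg, sub_smul]; abel
      rw [hzx, norm_smul, hx, mul_one, Real.norm_eq_abs] at hz
      rcases abs_eq (by norm_num : (0:ℝ) ≤ 1) |>.mp hz with h | h
      · right; rw [hzx]
        have : b - a = 1 := h
        rw [this, one_smul]
      · left; rw [hzx]
        have hb1 : b - a = -1 := h
        rw [hb1]; simp
    · rintro (rfl | rfl)
      · exact ⟨left_mem_segment ℝ _ _, by simpa using hx⟩
      · exact ⟨right_mem_segment ℝ _ _, hx⟩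
end

section
/- Let U = {x ∈ l² : |x₁| < sup_{n≥2} n|xₙ|}. Then U is open and dense in l² (with the norm topology). -/
open scoped ENNReal

/-- Example 2.6 (first part): the set `U = {x ∈ l² : |x₁| < sup_{n ≥ 2} n|xₙ|}` is open
and dense in `l²` (norm topology).  Sequences are indexed from `0` in Lean, so the
`n`-th term `xₙ` (n ≥ 1) of the paper is `x (n-1)` here, and the supremum is taken
in `[0,∞]`. -/
theorem open_dense_set_lp
    (U : Set (lp (fun _ : ℕ => ℝ) 2))
    (hU : U = {x : lp (fun _ : ℕ => ℝ) 2 |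
      (‖x 0‖₊ : ℝ≥0∞) < ⨆ (n : ℕ) (_ : 2 ≤ n), (n : ℝ≥0∞) * (‖x (n - 1)‖₊ : ℝ≥0∞)}) :
    IsOpen U ∧ Dense U := by
  haveI : Fact ((1 : ℝ≥0∞) ≤ 2) := ⟨one_le_two⟩
  -- evaluation maps are continuous
  have hev : ∀ i : ℕ, Continuous fun x : lp (fun _ : ℕ => ℝ) 2 => x i := fun i =>
    (continuous_apply i).comp (lp.uniformContinuous_coe (p := 2)).continuous
  -- rewrite U as a union of explicitly open sets
  have hkey : ∀ (x : lp (fun _ : ℕ => ℝ) 2) (n : ℕ),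
      ((‖x 0‖₊ : ℝ≥0∞) < (n : ℝ≥0∞) * (‖x (n - 1)‖₊ : ℝ≥0∞)) ↔
        ‖x 0‖ < (n : ℝ) * ‖x (n - 1)‖ := by
    intro x n
    rw [← ENNReal.coe_natCast, ← ENNReal.coe_mul, ENNReal.coe_lt_coe, ← NNReal.coe_lt_coe]
    push_cast
    simp [coe_nnnorm]
  have hUeq : U = ⋃ (n : ℕ) (_ : 2 ≤ n),
      {x : lp (fun _ : ℕ => ℝ) 2 | ‖x 0‖ < (n : ℝ) * ‖x (n - 1)‖} := by
    rw [hU]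
    ext x
    simp only [Set.mem_setOf_eq, Set.mem_iUnion, lt_iSup_iff]
    constructor
    · rintro ⟨n, hn, h⟩; exact ⟨n, hn, (hkey x n).mp h⟩
    · rintro ⟨n, hn, h⟩; exact ⟨n, hn, (hkey x n).mpr h⟩
  constructor
  · rw [hUeq]
    refine isOpen_iUnion fun n => isOpen_iUnion fun _ => ?_
    exact isOpen_lt ((hev 0).norm) (continuous_const.mul ((hev (n - 1)).norm))
  · rw [Metric.dense_iff]
    intro x ε hε
    -- choose a large index n
    have hsum : Summable fun i => ‖x i‖ ^ (2 : ℝ≥0∞).toReal :=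
      (lp.memℓp x).summable (by norm_num)
    have htend : Filter.Tendsto (fun i => ‖x i‖) Filter.atTop (nhds 0) := by
      have h2 := hsum.tendsto_atTop_zero
      have h3 : Filter.Tendsto (fun i => Real.sqrt (‖x i‖ ^ (2 : ℝ≥0∞).toReal))
          Filter.atTop (nhds (Real.sqrt 0)) := h2.sqrt
      rw [Real.sqrt_zero] at h3
      refine h3.congr fun i => ?_
      rw [ENNReal.toReal_ofNat, show ((2 : ℝ)) = ((2 : ℕ) : ℝ) by norm_num,
        Real.rpow_natCast, Real.sqrt_sq (norm_nonneg _)]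
    have h1 : ∀ᶠ n : ℕ in Filter.atTop, ‖x (n - 1)‖ < ε / 4 :=
      (Filter.tendsto_sub_atTop_nat 1).eventually
        (htend.eventually_lt_const (by positivity))
    have h2 : ∀ᶠ n : ℕ in Filter.atTop, ‖x 0‖ < (n : ℝ) * (ε / 4) := by
      have : Filter.Tendsto (fun n : ℕ => (n : ℝ) * (ε / 4)) Filter.atTop Filter.atTop :=
        (tendsto_natCast_atTop_atTop).atTop_mul_const (by positivity)
      exact this.eventually_gt_atTop _
    obtain ⟨n, hn2, hn1, hn0⟩ := ((Filter.eventually_ge_atTop 2).and (h1.and h2)).exists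
    -- the perturbation
    set y : lp (fun _ : ℕ => ℝ) 2 := x + lp.single 2 (n - 1) (ε / 2) with hy
    have hsingle : ∀ j, lp.single (E := fun _ : ℕ => ℝ) 2 (n - 1) (ε / 2) j =
        if j = n - 1 then ε / 2 else 0 := by
      intro j
      rcases eq_or_ne j (n - 1) with h | h
      · subst h; simp [lp.single_apply_self]
      · simp [lp.single_apply_ne _ _ _ h, h]
    have hy0 : y 0 = x 0 := by
      have h0 : (0 : ℕ) ≠ n - 1 := by omega
      simp [hy, lp.coeFn_add, hsingle, h0]
    have hyn : y (n - 1) = x (n - 1) + ε / 2 := by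
      simp [hy, lp.coeFn_add, hsingle]
    have hynorm : ε / 4 < ‖y (n - 1)‖ := by
      rw [hyn, Real.norm_eq_abs]
      rw [Real.norm_eq_abs] at hn1
      have hx := abs_lt.mp hn1
      rw [abs_of_pos (by linarith)]
      linarith
    refine ⟨y, ?_, ?_⟩
    · rw [Metric.mem_ball, dist_eq_norm]
      have : y - x = lp.single 2 (n - 1) (ε / 2) := by
        rw [hy]; abel
      rw [this]
      have := lp.norm_single (E := fun _ : ℕ => ℝ) (p := 2) (by norm_num)
        (n - 1) (ε / 2)
      rw [this]
      rw [Real.norm_eq_abs, abs_of_pos (by positivity)]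
      linarith
    · rw [hU]
      refine lt_of_lt_of_le (b := (n : ℝ≥0∞) * (‖y (n - 1)‖₊ : ℝ≥0∞)) ?_ ?_
      · rw [hkey]
        rw [hy0]
        calc ‖x 0‖ < (n : ℝ) * (ε / 4) := hn0
          _ < (n : ℝ) * ‖y (n - 1)‖ := by
              have hnpos : (0 : ℝ) < n := by positivity
              exact (mul_lt_mul_iff_right₀ (by exact_mod_cast (by omega : 0 < n))).2 hynorm
      · exact le_iSup₂ (f := fun (k : ℕ) (_ : 2 ≤ k) => (k : ℝ≥0∞) * (‖y (k - 1)‖₊ : ℝ≥0∞))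
          n hn2
end

section
/- Let U = {x ∈ l² : |x₁| < sup_{n≥2} n|xₙ|}. Then U is not self-segment-dense in l²: for x = (1, 1, 1/9, ..., 1/n², ...) and y = (1, −1, 1/18, ..., 1/(2n²), ...), both in U, the point (1−t)x + t y lies outside U for every t ∈ [1/4, 3/4]. -/
open scoped ENNReal

lemma aux_le_one (n : ℕ) (r : ℝ) (h : (n : ℝ) * |r| ≤ 1) :
    (n : ℝ≥0∞) * (‖r‖₊ : ℝ≥0∞) ≤ 1 := by
  rw [← ENNReal.coe_natCast, ← ENNReal.coe_mul, ← ENNReal.coe_one, ENNReal.coe_le_coe,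
    ← NNReal.coe_le_coe]
  push_cast
  simpa [Real.norm_eq_abs] using h

/-- Example 2.6 (second part): `U = {x ∈ l² : |x₁| < sup_{n≥2} n|xₙ|}` is not
self-segment-dense in `l²`: for `x = (1, 1, 1/9, …, 1/n², …)` and
`y = (1, -1, 1/18, …, 1/(2n²), …)`, both in `U`, the point `(1-t)x + ty` lies
outside `U` for every `t ∈ [1/4, 3/4]`.  (Indexing from `0`: the paper's `xₙ` is
`x (n-1)` here.) -/
theorem not_selfSegmentDense_lp
    (U : Set (lp (fun _ : ℕ => ℝ) 2))
    (hU : U = {z : lp (fun _ : ℕ => ℝ) 2 |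
      (‖z 0‖₊ : ℝ≥0∞) < ⨆ (n : ℕ) (_ : 2 ≤ n), (n : ℝ≥0∞) * (‖z (n - 1)‖₊ : ℝ≥0∞)})
    (x y : lp (fun _ : ℕ => ℝ) 2)
    (hx0 : x 0 = 1) (hx1 : x 1 = 1)
    (hxn : ∀ n : ℕ, 2 ≤ n → x n = 1 / ((n : ℝ) + 1) ^ 2)
    (hy0 : y 0 = 1) (hy1 : y 1 = -1)
    (hyn : ∀ n : ℕ, 2 ≤ n → y n = 1 / (2 * ((n : ℝ) + 1) ^ 2)) :
    x ∈ U ∧ y ∈ U ∧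
      ∀ t ∈ Set.Icc (1 / 4 : ℝ) (3 / 4), (1 - t) • x + t • y ∉ U := by
  subst hU
  refine ⟨?_, ?_, ?_⟩
  · show (‖x 0‖₊ : ℝ≥0∞) < _
    refine lt_of_lt_of_le ?_
      (le_iSup₂ (f := fun (n : ℕ) (_ : 2 ≤ n) => (n : ℝ≥0∞) * (‖x (n - 1)‖₊ : ℝ≥0∞)) 2 le_rfl)
    norm_num [hx0, hx1]
  · show (‖y 0‖₊ : ℝ≥0∞) < _
    refine lt_of_lt_of_le ?_
      (le_iSup₂ (f := fun (n : ℕ) (_ : 2 ≤ n) => (n : ℝ≥0∞) * (‖y (n - 1)‖₊ : ℝ≥0∞)) 2 le_rfl)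
    norm_num [hy0, hy1]
  · rintro t ⟨ht1, ht2⟩ hmem
    set z := (1 - t) • x + t • y with hzdef
    have hz : ∀ n, z n = (1 - t) * x n + t * y n := by
      intro n
      simp [hzdef]
      rfl
    have hz0 : z 0 = 1 := by rw [hz, hx0, hy0]; ring
    have hsup : (⨆ (n : ℕ) (_ : 2 ≤ n), (n : ℝ≥0∞) * (‖z (n - 1)‖₊ : ℝ≥0∞)) ≤ 1 := by
      refine iSup₂_le fun n hn => aux_le_one n _ ?_
      rcases eq_or_lt_of_le hn with h2 | h3
      · subst h2
        have : z 1 = 1 - 2 * t := by rw [hz, hx1, hy1]; ring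
        rw [this]
        push_cast
        have habs : |1 - 2 * t| ≤ 1 / 2 := by
          rw [abs_le]; constructor <;> linarith
        linarith
      · have hn3 : 3 ≤ n := h3
        have hm : 2 ≤ n - 1 := by omega
        have hnn : ((n - 1 : ℕ) : ℝ) + 1 = (n : ℝ) := by
          have : (1 : ℕ) ≤ n := by omega
          push_cast [Nat.cast_sub this]
          ring
        have hzv : z (n - 1) = (1 - t / 2) / (n : ℝ) ^ 2 := by
          rw [hz, hxn _ hm, hyn _ hm, hnn]; ring
        have hnp : (3 : ℝ) ≤ (n : ℝ) := by exact_mod_cast hn3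
        rw [hzv, abs_of_nonneg (div_nonneg (by linarith) (by positivity))]
        rw [div_eq_mul_inv, ← mul_assoc]
        have h1 : (n : ℝ) * (1 - t / 2) ≤ (n : ℝ) := by nlinarith
        have h2 : ((n : ℝ) ^ 2)⁻¹ ≤ (n : ℝ)⁻¹ * (n : ℝ)⁻¹ := by
          rw [sq, mul_inv]
        calc (n : ℝ) * (1 - t / 2) * ((n : ℝ) ^ 2)⁻¹
            ≤ (n : ℝ) * ((n : ℝ) ^ 2)⁻¹ := by
              apply mul_le_mul_of_nonneg_right h1 (by positivity)
          _ = (n : ℝ)⁻¹ := by field_simp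
          _ ≤ 1 := by rw [inv_le_one_iff₀]; right; linarith
    have hlt : (1 : ℝ≥0∞) < 1 := by
      have := hmem
      rw [Set.mem_setOf_eq, hz0] at this
      simpa using lt_of_lt_of_le this hsup
    exact lt_irrefl _ hlt
end

section
/- Let U = {x ∈ l² : |x₁| < sup_{n≥2} n|xₙ|}. Then U is segment-dense in l²: for every y ∈ l² there exists x ∈ U such that the half-open segment [x, y) is contained in U (in particular y is a cluster point of [y,x] ∩ U). -/
open scoped ENNReal NNReal

noncomputable def segw : ℕ → ℝ := fun m =>
  if 4 ^ Nat.log 4 (m + 1) = m + 1 ∧ 1 ≤ m then (2 : ℝ)⁻¹ ^ Nat.log 4 (m + 1) else 0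

lemma segw_eval (j : ℕ) (hj : 1 ≤ j) : segw (4 ^ j - 1) = (2 : ℝ)⁻¹ ^ j := by
  have h4 : (4:ℕ) ^ 1 ≤ 4 ^ j := Nat.pow_le_pow_right (by norm_num) hj
  have hm : (4 ^ j - 1) + 1 = 4 ^ j := Nat.sub_add_cancel (Nat.one_le_pow _ _ (by norm_num))
  unfold segw
  rw [hm, Nat.log_pow (by norm_num : 1 < 4), if_pos ⟨rfl, by omega⟩]

lemma segw_mem : Memℓp segw 2 := by
  apply memℓp_gen
  have htr : (2 : ℝ≥0∞).toReal = (2:ℝ) := by simp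
  rw [htr]
  have hEq : ∀ m, ‖segw m‖ ^ (2:ℝ) = ‖segw m‖ ^ (2:ℕ) := fun m => by
    rw [← Real.rpow_natCast]; norm_num
  simp only [hEq]
  set g : ℕ → ℝ := fun m => ‖segw m‖ ^ (2:ℕ) with hg
  set i : ℕ → ℕ := fun j => 4 ^ (j + 1) - 1 with hi
  have hinj : Function.Injective i := by
    intro a b h
    have ha : (4:ℕ) ^ (a+1) = 4 ^ (b+1) := by
      have h1 : (1:ℕ) ≤ 4 ^ (a+1) := Nat.one_le_pow _ _ (by norm_num)
      have h2 : (1:ℕ) ≤ 4 ^ (b+1) := Nat.one_le_pow _ _ (by norm_num)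
      simp only [hi] at h; omega
    have := Nat.pow_right_injective (by norm_num : 2 ≤ 4) ha
    omega
  have hsupp : ∀ m ∉ Set.range i, g m = 0 := by
    intro m hm
    by_contra hne
    have hw : segw m ≠ 0 := by
      intro h0; apply hne; simp [hg, h0]
    have hcond : 4 ^ Nat.log 4 (m + 1) = m + 1 ∧ 1 ≤ m := by
      by_contra hc; apply hw; unfold segw; rw [if_neg hc]
    obtain ⟨hpow, hm1⟩ := hcond
    set L := Nat.log 4 (m + 1) with hL
    have hL1 : 1 ≤ L := by
      by_contra hL0
      interval_cases L; omega
    apply hm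
    have hLe : (4:ℕ) ^ (L - 1 + 1) = 4 ^ L := by congr 1; omega
    exact ⟨L - 1, by simp only [hi]; omega⟩
  rw [← hinj.summable_iff hsupp]
  have hgi : (g ∘ i) = fun j => ((4:ℝ)⁻¹) ^ (j + 1) := by
    funext j
    have := segw_eval (j + 1) (by omega)
    simp only [hg, hi, Function.comp_apply, this]
    rw [norm_pow, norm_inv, Real.norm_ofNat, ← pow_mul,
      show (j + 1) * 2 = 2 * (j + 1) by ring, pow_mul]
    norm_num
  rw [hgi]
  have : Summable (fun j : ℕ => ((4:ℝ)⁻¹) ^ j) :=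
    summable_geometric_of_lt_one (by norm_num) (by norm_num)
  simpa [pow_succ, mul_comm] using this.mul_left ((4:ℝ)⁻¹)

noncomputable def segF : (ℕ → ℝ) → ℝ≥0∞ := fun a =>
  ⨆ (n : ℕ) (_ : 2 ≤ n), (n : ℝ≥0∞) * (‖a (n - 1)‖₊ : ℝ≥0∞)

lemma segF_w_top : segF segw = ⊤ := by
  rw [eq_top_iff, ← ENNReal.iSup_natCast]
  refine iSup_le fun j => ?_
  have hn : 2 ≤ 4 ^ (j + 1) := by
    calc 2 ≤ 4 ^ 1 := by norm_num
    _ ≤ 4 ^ (j+1) := Nat.pow_le_pow_right (by norm_num) (by omega)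
  have hle : ((4 ^ (j+1) : ℕ) : ℝ≥0∞) * (‖segw (4 ^ (j+1) - 1)‖₊ : ℝ≥0∞) ≤ segF segw :=
    le_iSup₂ (f := fun (n : ℕ) (_ : 2 ≤ n) => (n : ℝ≥0∞) * (‖segw (n - 1)‖₊ : ℝ≥0∞))
      (4 ^ (j+1)) hn
  refine le_trans ?_ hle
  have heval : segw (4 ^ (j + 1) - 1) = (2 : ℝ)⁻¹ ^ (j + 1) := segw_eval (j + 1) (by omega)
  rw [heval]
  have hnn : ((‖(2:ℝ)⁻¹ ^ (j+1)‖₊ : ℝ≥0) : ℝ≥0∞) = ((2:ℝ≥0∞)⁻¹) ^ (j+1) := by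
    rw [nnnorm_pow, nnnorm_inv, Real.nnnorm_ofNat]
    rw [ENNReal.coe_pow, ENNReal.coe_inv (by norm_num)]
    norm_num
  rw [hnn]
  have hcast : ((4 ^ (j+1) : ℕ) : ℝ≥0∞) = (4 : ℝ≥0∞) ^ (j + 1) := by push_cast; ring
  rw [hcast, ← mul_pow, show (4:ℝ≥0∞) * 2⁻¹ = 2 by
    rw [show (4:ℝ≥0∞) = 2 * 2 by norm_num, mul_assoc,
      ENNReal.mul_inv_cancel two_ne_zero ENNReal.ofNat_ne_top, mul_one]]
  calc (j : ℝ≥0∞) ≤ ((2 ^ (j+1) : ℕ) : ℝ≥0∞) := by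
        exact_mod_cast (Nat.lt_two_pow_self (n := j)).le.trans (Nat.pow_le_pow_right (by norm_num) (by omega))
  _ = (2:ℝ≥0∞) ^ (j+1) := by push_cast; ring

lemma segF_add (a b : ℕ → ℝ) : segF (a + b) ≤ segF a + segF b := by
  refine iSup₂_le fun n hn => ?_
  have h1 : (‖(a + b) (n - 1)‖₊ : ℝ≥0∞) ≤ (‖a (n - 1)‖₊ : ℝ≥0∞) + (‖b (n - 1)‖₊ : ℝ≥0∞) := by
    rw [← ENNReal.coe_add]
    exact_mod_cast nnnorm_add_le _ _
  calc (n : ℝ≥0∞) * ‖(a + b) (n - 1)‖₊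
      ≤ (n : ℝ≥0∞) * ((‖a (n - 1)‖₊ : ℝ≥0∞) + (‖b (n - 1)‖₊ : ℝ≥0∞)) :=
        mul_le_mul_right h1 _
    _ = (n : ℝ≥0∞) * ‖a (n - 1)‖₊ + (n : ℝ≥0∞) * ‖b (n - 1)‖₊ := mul_add _ _ _
    _ ≤ segF a + segF b := add_le_add
        (le_iSup₂ (f := fun (n : ℕ) (_ : 2 ≤ n) => (n : ℝ≥0∞) * (‖a (n - 1)‖₊ : ℝ≥0∞)) n hn)
        (le_iSup₂ (f := fun (n : ℕ) (_ : 2 ≤ n) => (n : ℝ≥0∞) * (‖b (n - 1)‖₊ : ℝ≥0∞)) n hn)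

lemma segF_smul (c : ℝ) (a : ℕ → ℝ) : segF (c • a) = ‖c‖₊ * segF a := by
  unfold segF
  simp only [ENNReal.mul_iSup]
  refine iSup_congr fun n => iSup_congr fun hn => ?_
  simp only [Pi.smul_apply, smul_eq_mul, nnnorm_mul, ENNReal.coe_mul]
  ring

lemma segF_unique (a : ℕ → ℝ) {s s' : ℝ} (hs : segF (a + s • segw) ≠ ⊤)
    (hs' : segF (a + s' • segw) ≠ ⊤) : s = s' := by
  by_contra hne
  have hfun : (s - s') • segw = (a + s • segw) + (-1 : ℝ) • (a + s' • segw) := by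
    funext m
    simp only [Pi.smul_apply, Pi.add_apply, smul_eq_mul]
    ring
  have hle : segF ((s - s') • segw) ≤ segF (a + s • segw) + segF ((-1:ℝ) • (a + s' • segw)) := by
    rw [hfun]; exact segF_add _ _
  rw [segF_smul, segF_smul] at hle
  rw [segF_w_top] at hle
  have hnz : (‖s - s'‖₊ : ℝ≥0∞) ≠ 0 := by
    simp only [ne_eq, ENNReal.coe_eq_zero, nnnorm_eq_zero, sub_eq_zero]
    exact hne
  rw [ENNReal.mul_top hnz] at hle
  have : segF (a + s • segw) + (‖(-1:ℝ)‖₊ : ℝ≥0∞) * segF (a + s' • segw) ≠ ⊤ := by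
    simp only [nnnorm_neg, nnnorm_one, ENNReal.coe_one, one_mul]
    exact ENNReal.add_ne_top.mpr ⟨hs, hs'⟩
  exact this (top_le_iff.mp hle)

/-- Example 2.6 (third part): `U = {x ∈ l² : |x₁| < sup_{n≥2} n|xₙ|}` is segment-dense
in `l²`: for every `y ∈ l²` there exists `x ∈ U` with the half-open segment
`[x, y) ⊆ U`; in particular `y` is a cluster point of `[y,x] ∩ U`. -/
theorem segmentDense_lp
    (U : Set (lp (fun _ : ℕ => ℝ) 2))
    (hU : U = {z : lp (fun _ : ℕ => ℝ) 2 |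
      (‖z 0‖₊ : ℝ≥0∞) < ⨆ (n : ℕ) (_ : 2 ≤ n), (n : ℝ≥0∞) * (‖z (n - 1)‖₊ : ℝ≥0∞)}) :
    ∀ y : lp (fun _ : ℕ => ℝ) 2, ∃ x ∈ U,
      (∀ t ∈ Set.Ioc (0 : ℝ) 1, (1 - t) • y + t • x ∈ U) ∧
        ClusterPt y (Filter.principal (segment ℝ y x ∩ U)) := by
  intro y
  set W : lp (fun _ : ℕ => ℝ) 2 := ⟨segw, segw_mem⟩ with hW
  have hWc : ⇑W = segw := rfl
  -- membership criterion
  have hmem : ∀ z : lp (fun _ : ℕ => ℝ) 2, segF ⇑z = ⊤ → z ∈ U := by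
    intro z hz
    rw [hU]
    have : (⨆ (n : ℕ) (_ : 2 ≤ n), (n : ℝ≥0∞) * (‖z (n - 1)‖₊ : ℝ≥0∞)) = ⊤ := hz
    rw [Set.mem_setOf_eq, this]
    exact ENNReal.coe_lt_top
  have hcoe : ∀ s : ℝ, ⇑(y + s • W) = ⇑y + s • segw := by
    intro s
    rw [lp.coeFn_add, lp.coeFn_smul, hWc]
  -- choose c > 0 such that every point y + (t*c) • W, t ∈ (0,1], has segF = ⊤
  obtain ⟨c, hc0, hc⟩ : ∃ c : ℝ, 0 < c ∧
      ∀ t ∈ Set.Ioc (0:ℝ) 1, segF (⇑y + (t * c) • segw) = ⊤ := by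
    by_cases hB : ∃ t₀ ∈ Set.Ioc (0:ℝ) 1, segF (⇑y + t₀ • segw) ≠ ⊤
    · obtain ⟨t₀, ht₀, hbad⟩ := hB
      refine ⟨t₀ / 2, by linarith [ht₀.1], fun t ht => ?_⟩
      by_contra hne
      have := segF_unique ⇑y hne hbad
      have hlt : t * (t₀ / 2) < t₀ := by nlinarith [ht.1, ht.2, ht₀.1]
      rw [this] at hlt
      exact lt_irrefl _ hlt
    · push_neg at hB
      refine ⟨1, one_pos, fun t ht => ?_⟩
      rw [mul_one]
      exact hB t ht
  refine ⟨y + c • W, ?_, ?_, ?_⟩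
  · -- x ∈ U
    apply hmem
    rw [hcoe]
    have := hc 1 ⟨one_pos, le_refl 1⟩
    rwa [one_mul] at this
  · -- segment
    intro t ht
    have hseg : (1 - t) • y + t • (y + c • W) = y + (t * c) • W := by module
    rw [hseg]
    apply hmem
    rw [hcoe]
    exact hc t ht
  · -- cluster point
    rw [← mem_closure_iff_clusterPt]
    have hseq : ∀ n : ℕ, (1 - ((n:ℝ) + 1)⁻¹) • y + ((n:ℝ)+1)⁻¹ • (y + c • W)
        ∈ segment ℝ y (y + c • W) ∩ U := by
      intro n
      have hpos : (0:ℝ) < ((n:ℝ) + 1)⁻¹ := by positivity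
      have hle1 : ((n:ℝ) + 1)⁻¹ ≤ 1 := by
        rw [inv_le_one_iff₀]; right; linarith [Nat.cast_nonneg (α := ℝ) n]
      constructor
      · exact ⟨1 - ((n:ℝ)+1)⁻¹, ((n:ℝ)+1)⁻¹, by linarith, le_of_lt hpos, by ring, rfl⟩
      · have hseg : (1 - ((n:ℝ)+1)⁻¹) • y + ((n:ℝ)+1)⁻¹ • (y + c • W)
            = y + (((n:ℝ)+1)⁻¹ * c) • W := by module
        rw [hseg]
        apply hmem
        rw [hcoe]
        exact hc _ ⟨hpos, hle1⟩
    have ht0 : Filter.Tendsto (fun n : ℕ => ((n:ℝ) + 1)⁻¹) Filter.atTop (nhds 0) :=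
      tendsto_one_div_add_atTop_nhds_zero_nat.congr (fun n => by rw [one_div])
    have htend : Filter.Tendsto (fun n : ℕ =>
        (1 - ((n:ℝ) + 1)⁻¹) • y + ((n:ℝ)+1)⁻¹ • (y + c • W)) Filter.atTop (nhds y) := by
      have := ((ht0.const_sub 1).smul_const y).add (ht0.smul_const (y + c • W))
      simpa using this
    exact mem_closure_of_tendsto htend (Filter.Eventually.of_forall hseq)
end

section
/- Let f : X → ℝ ∪ {±∞} be proper and lower semicontinuous on X, and U ⊆ dom f dense. Then f̄_U(u) = f(u) for all u ∈ U, dom f̄_U ⊆ dom f, f̄_U(x) ≥ f(x) for all x ∈ X, and f̄_U = f on X if and only if U is graphically dense in dom f. -/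
open Filter Topology

/-- Theorem 3.1(b): let `f : X → ℝ ∪ {±∞}` be proper and lower semicontinuous on `X`,
`U ⊆ dom f` dense in `dom f`, and let `f̄_U` (here `g`) be defined by
`epi f̄_U = cl{(u,r) ∈ U × ℝ : f(u) ≤ r}`.  Then `f̄_U = f` on `U`,
`dom f̄_U ⊆ dom f`, `f̄_U ≥ f` on `X`, and `f̄_U = f` on `X` if and only if `U`
is graphically dense in `dom f` (every `x ∈ dom f` is a limit of a net `(uᵢ) ⊆ U`
with `f(uᵢ) → f(x)`, i.e. `(x, f x)` is in the closure of the graph of `f` over `U`). -/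
theorem closure_epi_eq_iff_graphically_dense
    {X : Type*} [AddCommGroup X] [Module ℝ X] [TopologicalSpace X]
    [IsTopologicalAddGroup X] [ContinuousSMul ℝ X] [LocallyConvexSpace ℝ X] [T2Space X]
    (f : X → EReal) (hproper : (∃ x, f x < ⊤) ∧ ∀ x, ⊥ < f x)
    (hlsc : LowerSemicontinuous f)
    (U : Set X) (hU : U ⊆ {x | f x < ⊤}) (hdense : {x | f x < ⊤} ⊆ closure U)
    (g : X → EReal)
    (hg : {p : X × ℝ | g p.1 ≤ (p.2 : EReal)} =
      closure {p : X × ℝ | p.1 ∈ U ∧ f p.1 ≤ (p.2 : EReal)}) :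
    (∀ u ∈ U, g u = f u) ∧
      {x | g x < ⊤} ⊆ {x | f x < ⊤} ∧
      (∀ x, f x ≤ g x) ∧
      (g = f ↔ ∀ x, f x < ⊤ →
        (x, f x) ∈ closure {p : X × EReal | p.1 ∈ U ∧ p.2 = f p.1}) := by
  set E : Set (X × ℝ) := {p : X × ℝ | p.1 ∈ U ∧ f p.1 ≤ (p.2 : EReal)} with hE
  -- the epigraph of f (over ℝ) is closed
  have hepi : IsClosed {p : X × ℝ | f p.1 ≤ (p.2 : EReal)} := by
    have h1 : IsClosed {q : X × EReal | f q.1 ≤ q.2} := hlsc.isClosed_epigraph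
    have h2 : {p : X × ℝ | f p.1 ≤ (p.2 : EReal)} =
        (fun p : X × ℝ => ((p.1, (p.2 : EReal)) : X × EReal)) ⁻¹'
          {q : X × EReal | f q.1 ≤ q.2} := rfl
    rw [h2]
    exact h1.preimage (continuous_fst.prodMk (continuous_coe_real_ereal.comp continuous_snd))
  have hsub : {p : X × ℝ | g p.1 ≤ (p.2 : EReal)} ⊆ {p : X × ℝ | f p.1 ≤ (p.2 : EReal)} := by
    rw [hg]; exact closure_minimal (fun p hp => hp.2) hepi
  have hfg : ∀ x, f x ≤ g x := by
    intro x
    rw [← EReal.le_of_forall_lt_iff_le]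
    intro z hz
    have h2 : ((x, z) : X × ℝ) ∈ {p : X × ℝ | g p.1 ≤ (p.2 : EReal)} := hz.le
    exact hsub h2
  have hgu : ∀ u ∈ U, g u = f u := by
    intro u hu
    have hut : f u ≠ ⊤ := (hU hu).ne
    have hub : f u ≠ ⊥ := (hproper.2 u).ne'
    refine le_antisymm ?_ (hfg u)
    have hmem : ((u, (f u).toReal) : X × ℝ) ∈ {p : X × ℝ | g p.1 ≤ (p.2 : EReal)} := by
      rw [hg]
      exact subset_closure ⟨hu, by rw [EReal.coe_toReal hut hub]⟩
    simpa [EReal.coe_toReal hut hub] using hmem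
  refine ⟨hgu, fun x hx => lt_of_le_of_lt (hfg x) hx, hfg, ?_, ?_⟩
  · -- forward direction
    intro heq x hx
    have hxt : f x ≠ ⊤ := hx.ne
    have hxb : f x ≠ ⊥ := (hproper.2 x).ne'
    set t : ℝ := (f x).toReal with ht
    have hct : ((t : ℝ) : EReal) = f x := EReal.coe_toReal hxt hxb
    have hmem : ((x, t) : X × ℝ) ∈ closure E := by
      rw [← hg]
      show g x ≤ ((t : ℝ) : EReal)
      rw [hct, heq]
    haveI hne : (𝓝[E] ((x, t) : X × ℝ)).NeBot := mem_closure_iff_nhdsWithin_neBot.1 hmem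
    set l := 𝓝[E] ((x, t) : X × ℝ) with hl
    have hfst : Tendsto (fun p : X × ℝ => p.1) l (𝓝 x) :=
      (continuous_fst.tendsto _).mono_left nhdsWithin_le_nhds
    have hsnd : Tendsto (fun p : X × ℝ => p.2) l (𝓝 t) :=
      (continuous_snd.tendsto _).mono_left nhdsWithin_le_nhds
    have hEev : ∀ᶠ p in l, p ∈ E := eventually_mem_nhdsWithin
    have hsnd' : Tendsto (fun p : X × ℝ => ((p.2 : ℝ) : EReal)) l (𝓝 (f x)) := by
      rw [← hct]
      exact (continuous_coe_real_ereal.tendsto t).comp hsnd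
    have hlimsup : limsup (fun p : X × ℝ => f p.1) l ≤ f x := by
      calc limsup (fun p : X × ℝ => f p.1) l
          ≤ limsup (fun p : X × ℝ => ((p.2 : ℝ) : EReal)) l :=
            limsup_le_limsup (hEev.mono fun p hp => hp.2)
        _ = f x := hsnd'.limsup_eq
    have hliminf : f x ≤ liminf (fun p : X × ℝ => f p.1) l := by
      exact (le_liminf_iff (by isBoundedDefault) (by isBoundedDefault)).2
        fun y hy => hfst.eventually (hlsc x y hy)
    have htend : Tendsto (fun p : X × ℝ => f p.1) l (𝓝 (f x)) :=
      tendsto_of_le_liminf_of_limsup_le hliminf hlimsup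
    have hmap : Tendsto (fun p : X × ℝ => ((p.1, f p.1) : X × EReal)) l (𝓝 (x, f x)) :=
      hfst.prodMk_nhds htend
    exact mem_closure_of_tendsto hmap (hEev.mono fun p hp => ⟨hp.1, rfl⟩)
  · -- backward direction
    intro h
    funext x
    refine le_antisymm ?_ (hfg x)
    by_cases hx : f x < ⊤
    · have hxt : f x ≠ ⊤ := hx.ne
      have hxb : f x ≠ ⊥ := (hproper.2 x).ne'
      set t : ℝ := (f x).toReal with ht
      have hct : ((t : ℝ) : EReal) = f x := EReal.coe_toReal hxt hxb
      set G : Set (X × EReal) := {p : X × EReal | p.1 ∈ U ∧ p.2 = f p.1} with hG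
      have hmem : ((x, f x) : X × EReal) ∈ closure G := h x hx
      haveI hne : (𝓝[G] ((x, f x) : X × EReal)).NeBot :=
        mem_closure_iff_nhdsWithin_neBot.1 hmem
      set l := 𝓝[G] ((x, f x) : X × EReal) with hl
      have hfst : Tendsto (fun p : X × EReal => p.1) l (𝓝 x) :=
        (continuous_fst.tendsto _).mono_left nhdsWithin_le_nhds
      have hsnd : Tendsto (fun p : X × EReal => p.2) l (𝓝 (f x)) :=
        (continuous_snd.tendsto _).mono_left nhdsWithin_le_nhds
      have hGev : ∀ᶠ p in l, p ∈ G := eventually_mem_nhdsWithin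
      have htoReal : Tendsto (fun p : X × EReal => p.2.toReal) l (𝓝 t) :=
        (EReal.tendsto_toReal hxt hxb).comp hsnd
      have hfin : ∀ᶠ p in l, p.2 ∈ Set.Ioo (⊥ : EReal) ⊤ :=
        hsnd.eventually (isOpen_Ioo.eventually_mem ⟨Ne.bot_lt hxb, hx⟩)
      have hψ : Tendsto (fun p : X × EReal => ((p.1, p.2.toReal) : X × ℝ)) l (𝓝 (x, t)) :=
        hfst.prodMk_nhds htoReal
      have hmemE : ((x, t) : X × ℝ) ∈ closure E := by
        refine mem_closure_of_tendsto hψ ?_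
        filter_upwards [hGev, hfin] with p hp hpf
        refine ⟨hp.1, ?_⟩
        rw [EReal.coe_toReal hpf.2.ne hpf.1.ne', hp.2]
      have hgx : g x ≤ ((t : ℝ) : EReal) := by
        have h2 : ((x, t) : X × ℝ) ∈ {p : X × ℝ | g p.1 ≤ (p.2 : EReal)} := by
          rw [hg]; exact hmemE
        exact h2
      rwa [hct] at hgx
    · simp only [not_lt, top_le_iff] at hx
      rw [hx]; exact le_top
end

section
/- Let X be a Hausdorff locally convex topological vector space, f : X → ℝ ∪ {±∞} proper with convex domain, U ⊆ dom f self-segment-dense in dom f, and suppose f is convex on U (i.e., f((1−t)u + t v) ≤ (1−t)f(u) + t f(v) whenever u, v ∈ U, t ∈ [0,1] and (1−t)u + t v ∈ U). Then f̄_U is convex, and epi f_U is self-segment-dense in epi f̄_U. -/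
open Topology

/-- If every segment between two points of `A` lies in `closure A`,
then `closure A` is convex. -/
lemma convex_closure_of_segments {E : Type*} [AddCommGroup E] [Module ℝ E]
    [TopologicalSpace E] [IsTopologicalAddGroup E] [ContinuousSMul ℝ E]
    {A : Set E} (h : ∀ p ∈ A, ∀ q ∈ A, segment ℝ p q ⊆ closure A) :
    Convex ℝ (closure A) := by
  intro p hp q hq a b ha hb hab
  have hcont : Continuous fun z : E × E => a • z.1 + b • z.2 := by fun_prop
  have hmem : (p, q) ∈ closure (A ×ˢ A) := by
    rw [closure_prod_eq]; exact ⟨hp, hq⟩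
  have hmaps : Set.MapsTo (fun z : E × E => a • z.1 + b • z.2) (A ×ˢ A) (closure A) := by
    rintro ⟨x, y⟩ ⟨hx, hy⟩
    exact h x hx y hy ⟨a, b, ha, hb, hab, rfl⟩
  have := map_mem_closure hcont hmem hmaps
  simpa [closure_closure] using this



/-- Theorem 3.1(c): let `f : X → ℝ ∪ {±∞}` be proper with convex domain,
`U ⊆ dom f` self-segment-dense in `dom f`, and `f` convex on `U`
(i.e. `f((1-t)u + tv) ≤ (1-t)f(u) + tf(v)` whenever `u, v ∈ U`, `t ∈ [0,1]`, and
`(1-t)u + tv ∈ U`).  Then `f̄_U` is convex (its epigraph, the closure of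
`epi f_U`, is a convex set) and `epi f_U` is self-segment-dense in `epi f̄_U`. -/
theorem closure_epi_convex_of_selfSegmentDense
    {X : Type*} [AddCommGroup X] [Module ℝ X] [TopologicalSpace X]
    [IsTopologicalAddGroup X] [ContinuousSMul ℝ X] [LocallyConvexSpace ℝ X] [T2Space X]
    (f : X → EReal) (hproper : (∃ x, f x < ⊤) ∧ ∀ x, ⊥ < f x)
    (hdom : Convex ℝ {x | f x < ⊤})
    (U : Set X) (hU : U ⊆ {x | f x < ⊤}) (hdense : {x | f x < ⊤} ⊆ closure U)
    (hssd : ∀ x ∈ U, ∀ y ∈ U, segment ℝ x y ⊆ closure (segment ℝ x y ∩ U))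
    (hconvU : ∀ u ∈ U, ∀ v ∈ U, ∀ t ∈ Set.Icc (0 : ℝ) 1,
      (1 - t) • u + t • v ∈ U →
        f ((1 - t) • u + t • v) ≤ ((1 - t : ℝ) : EReal) * f u + (t : EReal) * f v)
    (epiU : Set (X × ℝ))
    (hepiU : epiU = {p : X × ℝ | p.1 ∈ U ∧ f p.1 ≤ (p.2 : EReal)}) :
    Convex ℝ (closure epiU) ∧
      (epiU ⊆ closure epiU ∧
        ∀ p ∈ epiU, ∀ q ∈ epiU,
          segment ℝ p q ⊆ closure (segment ℝ p q ∩ epiU)) := by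
  -- main segment-density claim
  have key : ∀ p ∈ epiU, ∀ q ∈ epiU,
      segment ℝ p q ⊆ closure (segment ℝ p q ∩ epiU) := by
    rintro ⟨u, r⟩ hp ⟨v, s'⟩ hq z hz
    rw [hepiU] at hp hq
    obtain ⟨hu, hfu⟩ := hp
    obtain ⟨hv, hfv⟩ := hq
    obtain ⟨a, b, ha, hb, hab, rfl⟩ := hz
    -- real values of f u, f v
    obtain ⟨ru, hru⟩ : ∃ ru : ℝ, f u = (ru : EReal) :=
      ⟨(f u).toReal, ((f u).coe_toReal (lt_of_le_of_lt hfu (EReal.coe_lt_top r)).ne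
        (hproper.2 u).ne').symm⟩
    obtain ⟨rv, hrv⟩ : ∃ rv : ℝ, f v = (rv : EReal) :=
      ⟨(f v).toReal, ((f v).coe_toReal (lt_of_le_of_lt hfv (EReal.coe_lt_top s')).ne
        (hproper.2 v).ne').symm⟩
    have hrur : ru ≤ r := by rwa [hru, EReal.coe_le_coe_iff] at hfu
    have hrvs : rv ≤ s' := by rwa [hrv, EReal.coe_le_coe_iff] at hfv
    -- membership of parametrized points in epiU
    have hmemepi : ∀ s : ℝ, s ∈ Set.Icc (0:ℝ) 1 → (1 - s) • u + s • v ∈ U →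
        ((1 - s) • u + s • v, (1 - s) * r + s * s') ∈
          segment ℝ ((u, r) : X × ℝ) (v, s') ∩ epiU := by
      intro s hs hsU
      constructor
      · exact ⟨1 - s, s, by linarith [hs.2], hs.1, by ring, by
          simp [Prod.smul_def, Prod.ext_iff, smul_eq_mul]⟩
      · rw [hepiU]
        refine ⟨hsU, ?_⟩
        show f ((1 - s) • u + s • v) ≤ (((1 - s) * r + s * s' : ℝ) : EReal)
        have := hconvU u hu v hv s hs hsU
        rw [hru, hrv] at this
        refine this.trans ?_
        rw [← EReal.coe_mul, ← EReal.coe_mul, ← EReal.coe_add, EReal.coe_le_coe_iff]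
        have h1 : (1 - s) * ru ≤ (1 - s) * r :=
          mul_le_mul_of_nonneg_left hrur (by linarith [hs.2])
        have h2 : s * rv ≤ s * s' := mul_le_mul_of_nonneg_left hrvs hs.1
        linarith
    by_cases huv : u = v
    · -- degenerate segment
      subst huv
      have hx : a • u + b • u = u := by
        rw [← add_smul, hab, one_smul]
      have hzz : a • ((u, r) : X × ℝ) + b • ((u, s') : X × ℝ) = (u, a * r + b * s') := by
        rw [Prod.smul_mk, Prod.smul_mk, Prod.mk_add_mk, hx]
        simp [smul_eq_mul]
      apply subset_closure
      refine ⟨⟨a, b, ha, hb, hab, rfl⟩, ?_⟩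
      rw [hepiU, hzz]
      refine ⟨hu, ?_⟩
      show f u ≤ ((a * r + b * s' : ℝ) : EReal)
      have heq : ru = rv := by
        rw [hru] at hrv; exact_mod_cast hrv
      have hrus : ru ≤ s' := heq ▸ hrvs
      have h3 : ru = a * ru + b * ru := by rw [← add_mul, hab, one_mul]
      have : ru ≤ a * r + b * s' := by
        have h1 := mul_le_mul_of_nonneg_left hrur ha
        have h2 := mul_le_mul_of_nonneg_left hrus hb
        linarith
      rw [hru]
      exact EReal.coe_le_coe_iff.mpr this
    · -- nondegenerate: use the closed embedding s ↦ u + s • (v - u)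
      set φ : ℝ → X := fun s => u + s • (v - u) with hφ
      have hφemb : IsClosedEmbedding φ := by
        have h0 : v - u ≠ 0 := sub_ne_zero.mpr (Ne.symm huv)
        exact (Homeomorph.addLeft u).isClosedEmbedding.comp
          (isClosedEmbedding_smul_left h0)
      have hφeq : ∀ s : ℝ, φ s = (1 - s) • u + s • v := by
        intro s
        simp only [hφ, smul_sub, sub_smul, one_smul]
        abel
      -- S = parameters giving points of U
      set S : Set ℝ := Set.Icc (0:ℝ) 1 ∩ φ ⁻¹' U with hS
      -- b ∈ closure S
      have hbS : b ∈ closure S := by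
        have hseg : φ b ∈ segment ℝ u v := by
          rw [hφeq]
          exact ⟨1 - b, b, by linarith, hb, by ring, rfl⟩
        have h1 : φ b ∈ closure (segment ℝ u v ∩ U) := hssd u hu v hv hseg
        have hsegeq : segment ℝ u v = φ '' Set.Icc (0:ℝ) 1 := by
          ext x
          constructor
          · rintro ⟨c, d, hc, hd, hcd, rfl⟩
            exact ⟨d, ⟨hd, by linarith⟩, by rw [hφeq]; congr 1; · congr 1; linarith⟩
          · rintro ⟨s, hs, rfl⟩
            rw [hφeq]
            exact ⟨1 - s, s, by linarith [hs.2], hs.1, by ring, rfl⟩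
        have himg : segment ℝ u v ∩ U = φ '' S := by
          rw [hsegeq, hS, Set.image_inter_preimage]
        rw [himg, hφemb.closure_image_eq] at h1
        obtain ⟨s, hsS, hsb⟩ := h1
        rwa [hφemb.injective hsb] at hsS
      -- transport along the continuous map Φ
      have hΦcont : Continuous fun s : ℝ =>
          (((1 - s) • u + s • v : X), (1 - s) * r + s * s') := by fun_prop
      have hmaps : Set.MapsTo (fun s : ℝ =>
          (((1 - s) • u + s • v : X), (1 - s) * r + s * s')) S
          (segment ℝ ((u, r) : X × ℝ) (v, s') ∩ epiU) := by
        rintro s ⟨hs1, hs2⟩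
        have : φ s ∈ U := hs2
        rw [hφeq] at this
        exact hmemepi s hs1 this
      have := map_mem_closure hΦcont hbS hmaps
      have hzeq : a • ((u, r) : X × ℝ) + b • (v, s') =
          (((1 - b) • u + b • v : X), (1 - b) * r + b * s') := by
        have ha' : a = 1 - b := by linarith
        simp [Prod.smul_def, Prod.ext_iff, smul_eq_mul, ha']
      rw [hzeq]
      exact this
  refine ⟨?_, subset_closure, key⟩
  exact convex_closure_of_segments fun p hp q hq =>
    (key p hp q hq).trans (closure_mono Set.inter_subset_right)
end

section
/- Let X be a Hausdorff locally convex topological vector space and f, g : X → ℝ ∪ {±∞} two proper, convex, lower semicontinuous functions. Let U ⊆ dom f ∩ dom g be segment-dense in dom f ∩ dom g with f(u) = g(u) for all u ∈ U. Then f = g on dom f ∩ dom g. -/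
open Filter Set Topology

/-- Auxiliary lemma: one-sided inequality `f x ≤ g x` at a cluster point of the
segment-intersection with `U`, where `f = g` on `U`. -/
lemma aux_le_of_clusterPt
    {X : Type*} [AddCommGroup X] [Module ℝ X] [TopologicalSpace X]
    [IsTopologicalAddGroup X] [ContinuousSMul ℝ X] [LocallyConvexSpace ℝ X] [T2Space X]
    (f g : X → EReal)
    (hgconv : ∀ x y : X, ∀ t ∈ Set.Icc (0 : ℝ) 1,
      g ((1 - t) • x + t • y) ≤ ((1 - t : ℝ) : EReal) * g x + (t : EReal) * g y)
    (hflsc : LowerSemicontinuous f)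
    (U : Set X) (heq : ∀ z ∈ U, f z = g z)
    (x u : X) (hfx : f x < ⊤) (hgxbot : ⊥ < g x) (hgx : g x < ⊤)
    (hgubot : ⊥ < g u) (hgu : g u < ⊤)
    (hcl : ClusterPt x (Filter.principal (segment ℝ x u ∩ U))) :
    f x ≤ g x := by
  by_cases hxU : x ∈ U
  · exact (heq x hxU).le
  by_cases hxu : x = u
  · subst hxu
    rw [segment_same] at hcl
    have hempty : ({x} ∩ U : Set X) = ∅ := by
      ext z; simp only [Set.mem_inter_iff, Set.mem_singleton_iff, Set.mem_empty_iff_false,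
        iff_false, not_and]
      rintro rfl; exact hxU
    rw [hempty] at hcl
    have hb := hcl.neBot
    rw [Filter.principal_empty, inf_bot_eq] at hb
    exact absurd rfl hb.ne
  -- separate x and u by a continuous linear functional
  obtain ⟨L, hL⟩ := SeparatingDual.exists_separating_of_ne (R := ℝ) hxu
  set d : ℝ := L u - L x with hd
  have hd0 : d ≠ 0 := sub_ne_zero.mpr hL.symm
  set τ : X → ℝ := fun z => (L z - L x) / d with hτ
  have hτcont : Continuous τ := (L.continuous.sub continuous_const).div_const d
  have hτx : τ x = 0 := by simp [hτ]
  -- on the segment, τ recovers the parameter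
  have hτseg : ∀ z ∈ segment ℝ x u, z = (1 - τ z) • x + τ z • u ∧ τ z ∈ Set.Icc (0:ℝ) 1 := by
    intro z hz
    obtain ⟨a, b, ha, hb, hab, hz⟩ := hz
    have hzval : τ z = b := by
      have : L z = a * L x + b * L u := by
        rw [← hz]; simp [mul_comm]
      rw [hτ]
      simp only [this]
      have ha' : a = 1 - b := by linarith
      rw [ha']
      field_simp [hd]
      ring
    constructor
    · rw [hzval, ← hz]
      congr 1
      congr 1
      linarith
    · rw [hzval]
      exact ⟨hb, by linarith⟩
  -- real values of g
  set a' : ℝ := (g x).toReal with ha'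
  set b' : ℝ := (g u).toReal with hb'
  have hgx' : g x = (a' : EReal) := (EReal.coe_toReal hgx.ne hgxbot.ne').symm
  have hgu' : g u = (b' : EReal) := (EReal.coe_toReal hgu.ne hgubot.ne').symm
  set F := 𝓝 x ⊓ 𝓟 (segment ℝ x u ∩ U) with hF
  have hFne : F.NeBot := hcl
  -- bound g along the segment
  have hbound : ∀ z ∈ segment ℝ x u ∩ U,
      g z ≤ (((1 - τ z) * a' + τ z * b' : ℝ) : EReal) := by
    intro z hz
    obtain ⟨hrepr, hmem⟩ := hτseg z hz.1
    have := hgconv x u (τ z) hmem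
    rw [← hrepr, hgx', hgu'] at this
    calc g z ≤ ((1 - τ z : ℝ) : EReal) * (a' : EReal) + ((τ z : ℝ) : EReal) * (b' : EReal) := this
      _ = (((1 - τ z) * a' + τ z * b' : ℝ) : EReal) := by
          rw [← EReal.coe_mul, ← EReal.coe_mul, ← EReal.coe_add]
  -- the bound tends to a' along F
  have hτ0 : Tendsto τ F (𝓝 0) := by
    have := (hτcont.tendsto x).mono_left (inf_le_left : F ≤ 𝓝 x)
    rwa [hτx] at this
  have hc : Tendsto (fun z => (1 - τ z) * a' + τ z * b') F (𝓝 a') := by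
    have : Tendsto (fun z => (1 - τ z) * a' + τ z * b') F (𝓝 ((1 - 0) * a' + 0 * b')) :=
      (((tendsto_const_nhds.sub hτ0).mul tendsto_const_nhds).add
        (hτ0.mul tendsto_const_nhds))
    simpa using this
  -- conclude by contradiction
  by_contra hlt
  push_neg at hlt
  obtain ⟨y, hy1, hy2⟩ := exists_between hlt
  have hyT : y < ⊤ := hy2.trans hfx
  have hyB : ⊥ < y := hgxbot.trans hy1
  set r : ℝ := y.toReal with hr
  have hy' : y = (r : EReal) := (EReal.coe_toReal hyT.ne hyB.ne').symm
  have har : a' < r := by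
    rw [hgx', hy'] at hy1; exact_mod_cast hy1
  have hev1 : ∀ᶠ z in F, (1 - τ z) * a' + τ z * b' < r := hc.eventually_lt_const har
  have hev2 : ∀ᶠ z in F, y < f z :=
    (hflsc x y hy2).filter_mono (inf_le_left : F ≤ 𝓝 x)
  have hev3 : ∀ᶠ z in F, z ∈ segment ℝ x u ∩ U :=
    le_principal_iff.mp (inf_le_right : F ≤ 𝓟 (segment ℝ x u ∩ U))
  obtain ⟨z, h1, h2, h3⟩ := (hev1.and (hev2.and hev3)).exists
  have : y < y := by
    calc y < f z := h2
      _ = g z := heq z h3.2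
      _ ≤ (((1 - τ z) * a' + τ z * b' : ℝ) : EReal) := hbound z h3
      _ < (r : EReal) := by exact_mod_cast h1
      _ = y := hy'.symm
  exact lt_irrefl y this

/-- Proposition 3.6: let `f, g : X → ℝ ∪ {±∞}` be proper, convex and lower
semicontinuous functions on a Hausdorff locally convex topological vector space,
and `U ⊆ dom f ∩ dom g` segment-dense in `dom f ∩ dom g` with `f = g` on `U`.
Then `f = g` on `dom f ∩ dom g`. -/
theorem eq_on_dom_of_eq_on_segmentDense
    {X : Type*} [AddCommGroup X] [Module ℝ X] [TopologicalSpace X]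
    [IsTopologicalAddGroup X] [ContinuousSMul ℝ X] [LocallyConvexSpace ℝ X] [T2Space X]
    (f g : X → EReal)
    (hfproper : (∃ x, f x < ⊤) ∧ ∀ x, ⊥ < f x)
    (hgproper : (∃ x, g x < ⊤) ∧ ∀ x, ⊥ < g x)
    (hfconv : ∀ x y : X, ∀ t ∈ Set.Icc (0 : ℝ) 1,
      f ((1 - t) • x + t • y) ≤ ((1 - t : ℝ) : EReal) * f x + (t : EReal) * f y)
    (hgconv : ∀ x y : X, ∀ t ∈ Set.Icc (0 : ℝ) 1,
      g ((1 - t) • x + t • y) ≤ ((1 - t : ℝ) : EReal) * g x + (t : EReal) * g y)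
    (hflsc : LowerSemicontinuous f) (hglsc : LowerSemicontinuous g)
    (U : Set X) (hU : U ⊆ {x | f x < ⊤} ∩ {x | g x < ⊤})
    (hseg : ∀ v ∈ {x | f x < ⊤} ∩ {x | g x < ⊤}, ∃ u ∈ U,
      ClusterPt v (Filter.principal (segment ℝ v u ∩ U)))
    (heq : ∀ u ∈ U, f u = g u) :
    ∀ x ∈ {x | f x < ⊤} ∩ {x | g x < ⊤}, f x = g x := by
  intro x hx
  obtain ⟨u, huU, hcl⟩ := hseg x hx
  have hu := hU huU
  apply le_antisymm
  · exact aux_le_of_clusterPt f g hgconv hflsc U heq x u hx.1 (hgproper.2 x) hx.2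
      (hgproper.2 u) hu.2 hcl
  · exact aux_le_of_clusterPt g f hfconv hglsc U (fun z hz => (heq z hz).symm) x u hx.2
      (hfproper.2 x) hx.1 (hfproper.2 u) hu.1 hcl
end

section
/- Let X be a Hausdorff locally convex topological vector space, f : X → ℝ ∪ {±∞} proper, convex, and lower semicontinuous, and U ⊆ dom f self-segment-dense in dom f. Then f = f̄_U on conv(U); in particular inf_{x ∈ U} f(x) = inf_{x ∈ conv(U)} f(x). -/
open Set Filter Topology

namespace SSDAux

set_option linter.unusedSectionVars false

variable {X : Type*} [AddCommGroup X] [Module ℝ X] [TopologicalSpace X]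
  [IsTopologicalAddGroup X] [ContinuousSMul ℝ X] [T2Space X]

lemma ereal_comb_le {c d M : ℝ} {A B : EReal} (hA0 : A ≠ ⊥) (hB0 : B ≠ ⊥)
    (hAc : A ≤ (c : EReal)) (hBd : B ≤ (d : EReal)) {t : ℝ} (ht0 : 0 ≤ t) (ht1 : t ≤ 1)
    (hM : (1 - t) * c + t * d ≤ M) :
    ((1 - t : ℝ) : EReal) * A + (t : EReal) * B ≤ (M : EReal) := by
  have hAt : A ≠ ⊤ := ne_top_of_le_ne_top (EReal.coe_ne_top c) hAc
  have hBt : B ≠ ⊤ := ne_top_of_le_ne_top (EReal.coe_ne_top d) hBd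
  have hac : A.toReal ≤ c := by rwa [← EReal.coe_le_coe_iff, EReal.coe_toReal hAt hA0]
  have hbd : B.toReal ≤ d := by rwa [← EReal.coe_le_coe_iff, EReal.coe_toReal hBt hB0]
  rw [← EReal.coe_toReal hAt hA0, ← EReal.coe_toReal hBt hB0]
  calc ((1 - t : ℝ) : EReal) * (A.toReal : EReal) + (t : EReal) * (B.toReal : EReal)
      = (((1 - t) * A.toReal + t * B.toReal : ℝ) : EReal) := by
        rw [← EReal.coe_mul, ← EReal.coe_mul, ← EReal.coe_add]
    _ ≤ (M : EReal) := by
        rw [EReal.coe_le_coe_iff]; nlinarith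

lemma jensen_max (f : X → EReal) (hbot : ∀ x, ⊥ < f x)
    (hconv : ∀ x y : X, ∀ t ∈ Set.Icc (0 : ℝ) 1,
      f ((1 - t) • x + t • y) ≤ ((1 - t : ℝ) : EReal) * f x + (t : EReal) * f y) :
    ∀ (n : ℕ) (u : Fin n → X) (M : ℝ), (∀ i, f (u i) ≤ (M : EReal)) →
      ∀ μ : Fin n → ℝ, (∀ i, 0 ≤ μ i) → (∑ i, μ i = 1) →
      f (∑ i, μ i • u i) ≤ (M : EReal) := by
  intro n
  induction n with
  | zero => intro u M hM μ h0 h1; simp at h1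
  | succ n IH =>
    intro u M hM μ h0 h1
    rw [Fin.sum_univ_castSucc] at h1 ⊢
    by_cases ht : μ (Fin.last n) = 1
    · have hs0 : ∑ j : Fin n, μ j.castSucc = 0 := by rw [ht] at h1; linarith
      have hsum0 : ∑ j : Fin n, μ j.castSucc • u j.castSucc = 0 := by
        refine Finset.sum_eq_zero fun j _ => ?_
        have := (Finset.sum_eq_zero_iff_of_nonneg
          (fun i _ => h0 i.castSucc)).mp hs0 j (Finset.mem_univ j)
        rw [this, zero_smul]
      rw [hsum0, ht, one_smul, zero_add]
      exact hM _
    · have hsnn : 0 ≤ ∑ j : Fin n, μ j.castSucc := Finset.sum_nonneg fun i _ => h0 _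
      have htle : μ (Fin.last n) ≤ 1 := by linarith
      have htlt : μ (Fin.last n) < 1 := lt_of_le_of_ne htle ht
      set t := μ (Fin.last n) with htdef
      have hc : (0:ℝ) < 1 - t := by linarith
      set μ' : Fin n → ℝ := fun j => μ j.castSucc / (1 - t) with hμ'
      have hμ'0 : ∀ j, 0 ≤ μ' j := fun j => div_nonneg (h0 _) hc.le
      have hμ'1 : ∑ j, μ' j = 1 := by
        simp only [hμ', ← Finset.sum_div]
        field_simp
        linarith
      have hkey : ∑ j : Fin n, μ j.castSucc • u j.castSucc
          = (1 - t) • ∑ j : Fin n, μ' j • u j.castSucc := by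
        rw [Finset.smul_sum]
        refine Finset.sum_congr rfl fun j _ => ?_
        rw [smul_smul, hμ']
        congr 1
        field_simp
      rw [hkey]
      refine le_trans (hconv (∑ j : Fin n, μ' j • u (j.castSucc)) (u (Fin.last n)) t
        ⟨h0 _, htle⟩) ?_
      exact ereal_comb_le (hbot _).ne' (hbot _).ne'
        (IH (fun j => u j.castSucc) M (fun j => hM _) μ' hμ'0 hμ'1) (hM _)
        (h0 _) htle (by nlinarith)

lemma seg_param {U : Set X}
    (hssd : ∀ x ∈ U, ∀ y ∈ U, segment ℝ x y ⊆ closure (segment ℝ x y ∩ U))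
    {a b : X} (ha : a ∈ U) (hb : b ∈ U) {t : ℝ} (ht0 : 0 ≤ t) (ht1 : t ≤ 1)
    {δ : ℝ} (hδ : 0 < δ) :
    ∃ s, 0 ≤ s ∧ s ≤ 1 ∧ |s - t| < δ ∧ ((1 - s) • a + s • b) ∈ U := by
  by_cases hab : a = b
  · refine ⟨t, ht0, ht1, by simpa using hδ, ?_⟩
    rw [hab, ← add_smul]
    norm_num
    exact hb
  · set γ : ℝ → X := fun s => (1 - s) • a + s • b with hγ
    have hγc : Continuous γ := by
      apply Continuous.add
      · exact (continuous_const.sub continuous_id).smul continuous_const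
      · exact continuous_id.smul continuous_const
    have hzseg : γ t ∈ segment ℝ a b := ⟨1 - t, t, by linarith, ht0, by ring, rfl⟩
    have hzcl := hssd a ha b hb hzseg
    set K : Set X := γ '' (Icc (0:ℝ) 1 ∩ {s | δ ≤ |s - t|}) with hK
    have hKcl : IsClosed K := by
      apply IsCompact.isClosed
      apply IsCompact.image ?_ hγc
      exact isCompact_Icc.inter_right (isClosed_le continuous_const (by fun_prop))
    have hzK : γ t ∉ K := by
      rintro ⟨s, ⟨hsI, hsd⟩, hz⟩
      have hst : (t - s) • (a - b) = 0 := by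
        have h2 : (t - s) • (a - b) = ((1 - s) • a + s • b) - ((1 - t) • a + t • b) := by
          module
        rw [h2]
        have : γ s = (1 - s) • a + s • b := rfl
        rw [← this, hz]
        simp [hγ]
      rcases smul_eq_zero.mp hst with h | h
      · have hts : t = s := by
          have := sub_eq_zero.mp h
          linarith
        rw [← hts] at hsd
        simp only [sub_self, abs_zero, mem_setOf_eq] at hsd
        linarith
      · exact hab (sub_eq_zero.mp h)
    obtain ⟨w, hwO, hwS⟩ := mem_closure_iff.mp hzcl Kᶜ hKcl.isOpen_compl hzK
    rw [segment_eq_image] at hwS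
    obtain ⟨⟨s, hsI, hs⟩, hwU⟩ := hwS
    have hlt : |s - t| < δ := by
      by_contra hge
      exact hwO ⟨s, ⟨hsI, not_lt.mp hge⟩, hs⟩
    refine ⟨s, hsI.1, hsI.2, hlt, ?_⟩
    have heq : (1 - s) • a + s • b = w := hs
    rwa [heq]

lemma coord_density {U : Set X}
    (hssd : ∀ x ∈ U, ∀ y ∈ U, segment ℝ x y ⊆ closure (segment ℝ x y ∩ U)) :
    ∀ (n : ℕ) (u : Fin n → X), (∀ i, u i ∈ U) →
      ∀ lam : Fin n → ℝ, (∀ i, 0 ≤ lam i) → (∑ i, lam i = 1) →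
      lam ∈ closure {μ : Fin n → ℝ |
        (∀ i, 0 ≤ μ i) ∧ (∑ i, μ i = 1) ∧ (∑ i, μ i • u i) ∈ U} := by
  intro n
  induction n with
  | zero => intro u hu lam h0 h1; simp at h1
  | succ n IH =>
    intro u hu lam h0 h1
    have h1' := h1
    rw [Fin.sum_univ_castSucc] at h1'
    by_cases ht : lam (Fin.last n) = 1
    · have hs0 : ∑ j : Fin n, lam j.castSucc = 0 := by rw [ht] at h1'; linarith
      have hsum0 : ∑ j : Fin n, lam j.castSucc • u j.castSucc = 0 := by
        refine Finset.sum_eq_zero fun j _ => ?_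
        have := (Finset.sum_eq_zero_iff_of_nonneg
          (fun i _ => h0 i.castSucc)).mp hs0 j (Finset.mem_univ j)
        rw [this, zero_smul]
      refine subset_closure ⟨h0, h1, ?_⟩
      rw [Fin.sum_univ_castSucc, hsum0, ht, one_smul, zero_add]
      exact hu _
    · have hsnn : 0 ≤ ∑ j : Fin n, lam j.castSucc := Finset.sum_nonneg fun i _ => h0 _
      have htle : lam (Fin.last n) ≤ 1 := by linarith
      have htlt : lam (Fin.last n) < 1 := lt_of_le_of_ne htle ht
      set t := lam (Fin.last n) with htdef
      have hc : (0:ℝ) < 1 - t := by linarith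
      set lam' : Fin n → ℝ := fun j => lam j.castSucc / (1 - t) with hlam'
      have hlam'0 : ∀ j, 0 ≤ lam' j := fun j => div_nonneg (h0 _) hc.le
      have hlam'1 : ∑ j, lam' j = 1 := by
        simp only [hlam', ← Finset.sum_div]
        field_simp
        linarith
      have hlam'le : ∀ j, lam' j ≤ 1 := by
        intro j
        have := Finset.single_le_sum (f := lam') (fun i _ => hlam'0 i) (Finset.mem_univ j)
        rwa [hlam'1] at this
      have hIH := IH (fun j => u j.castSucc) (fun j => hu _) lam' hlam'0 hlam'1
      rw [Metric.mem_closure_iff] at hIH ⊢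
      intro ε hε
      set δ := ε / 3 with hδdef
      have hδ : 0 < δ := by positivity
      obtain ⟨μ', hμ'S, hμ'd⟩ := hIH δ hδ
      obtain ⟨hμ'0, hμ'1, hμ'U⟩ := hμ'S
      obtain ⟨s, hs0, hs1, hst, hwU⟩ := seg_param hssd hμ'U (hu (Fin.last n)) (h0 _) htle hδ
      set μ : Fin (n+1) → ℝ := Fin.lastCases s (fun j => (1 - s) * μ' j) with hμdef
      have hμlast : μ (Fin.last n) = s := Fin.lastCases_last
      have hμcast : ∀ j : Fin n, μ j.castSucc = (1 - s) * μ' j := fun j =>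
        Fin.lastCases_castSucc j
      refine ⟨μ, ⟨?_, ?_, ?_⟩, ?_⟩
      · intro i
        induction i using Fin.lastCases with
        | last => rw [hμlast]; exact hs0
        | cast j => rw [hμcast]; exact mul_nonneg (by linarith) (hμ'0 j)
      · rw [Fin.sum_univ_castSucc, hμlast]
        have : ∑ j : Fin n, μ j.castSucc = (1 - s) * ∑ j, μ' j := by
          rw [Finset.mul_sum]
          exact Finset.sum_congr rfl fun j _ => hμcast j
        rw [this, hμ'1]
        ring
      · rw [Fin.sum_univ_castSucc, hμlast]
        have : ∑ j : Fin n, μ j.castSucc • u j.castSucc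
            = (1 - s) • ∑ j, μ' j • u j.castSucc := by
          rw [Finset.smul_sum]
          refine Finset.sum_congr rfl fun j _ => ?_
          rw [hμcast, mul_smul]
        rw [this]
        exact hwU
      · have hbound : ∀ i : Fin (n+1), dist (lam i) (μ i) ≤ 2 * δ := by
          intro i
          induction i using Fin.lastCases with
          | last =>
            rw [hμlast, Real.dist_eq, ← htdef]
            rw [abs_sub_comm]
            linarith
          | cast j =>
            rw [hμcast, Real.dist_eq]
            have hlamc : lam j.castSucc = (1 - t) * lam' j := by
              rw [hlam']
              field_simp
            rw [hlamc]
            have hde : dist (lam' j) (μ' j) ≤ dist lam' μ' := dist_le_pi_dist lam' μ' j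
            have hdj : |lam' j - μ' j| < δ := by
              rw [← Real.dist_eq]
              exact lt_of_le_of_lt hde hμ'd
            have e1 : (1 - t) * lam' j - (1 - s) * μ' j
                = (s - t) * lam' j + (1 - s) * (lam' j - μ' j) := by ring
            rw [e1]
            refine le_trans (abs_add_le _ _) ?_
            rw [abs_mul, abs_mul]
            have h2 : |lam' j| ≤ 1 := by
              rw [abs_of_nonneg (hlam'0 j)]; exact hlam'le j
            have h3 : |(1:ℝ) - s| ≤ 1 := by rw [abs_of_nonneg (by linarith)]; linarith
            nlinarith [abs_nonneg (s - t), abs_nonneg (lam' j - μ' j),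
              abs_nonneg ((1:ℝ) - s), abs_nonneg (lam' j)]
        have : dist lam μ ≤ 2 * δ := by
          rw [dist_pi_le_iff (by positivity)]
          exact hbound
        calc dist lam μ ≤ 2 * δ := this
          _ < ε := by rw [hδdef]; linarith

lemma core_closure {U : Set X} (f : X → EReal) (hbot : ∀ x, ⊥ < f x)
    (hconv : ∀ x y : X, ∀ t ∈ Set.Icc (0 : ℝ) 1,
      f ((1 - t) • x + t • y) ≤ ((1 - t : ℝ) : EReal) * f x + (t : EReal) * f y)
    (hU : U ⊆ {x | f x < ⊤})
    (hssd : ∀ x ∈ U, ∀ y ∈ U, segment ℝ x y ⊆ closure (segment ℝ x y ∩ U))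
    (n : ℕ) (u : Fin n → X) (hu : ∀ i, u i ∈ U)
    (lam : Fin n → ℝ) (hpos : ∀ i, 0 < lam i) (hsum : ∑ i, lam i = 1)
    (r : ℝ) (hr : f (∑ i, lam i • u i) ≤ (r : EReal)) :
    ((∑ i, lam i • u i, r) : X × ℝ) ∈
      closure {p : X × ℝ | p.1 ∈ U ∧ f p.1 ≤ (p.2 : EReal)} := by
  have hn : 0 < n := by
    rcases Nat.eq_zero_or_pos n with h | h
    · subst h; simp at hsum
    · exact h
  haveI : Nonempty (Fin n) := Fin.pos_iff_nonempty.mp hn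
  set x := ∑ i, lam i • u i with hxdef
  set ρ := Finset.univ.inf' Finset.univ_nonempty lam with hρdef
  have hρ : 0 < ρ := (Finset.lt_inf'_iff _).mpr fun i _ => hpos i
  have hρle : ∀ i, ρ ≤ lam i := fun i => Finset.inf'_le _ (Finset.mem_univ i)
  set Ms := Finset.univ.sup' Finset.univ_nonempty (fun i => (f (u i)).toReal) with hMsdef
  have hfui : ∀ i, f (u i) ≤ (Ms : EReal) := by
    intro i
    have h1 : f (u i) ≠ ⊤ := (hU (hu i)).ne
    rw [← EReal.coe_toReal h1 (hbot _).ne']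
    exact EReal.coe_le_coe_iff.mpr (Finset.le_sup' (fun i => (f (u i)).toReal) (Finset.mem_univ i))
  set M' := max r Ms with hM'def
  set E := {p : X × ℝ | p.1 ∈ U ∧ f p.1 ≤ (p.2 : EReal)} with hEdef
  set Λ := {μ : Fin n → ℝ | (∀ i, 0 ≤ μ i) ∧ (∑ i, μ i = 1) ∧ (∑ i, μ i • u i) ∈ U}
    with hΛdef
  have hden : lam ∈ closure Λ := coord_density hssd n u hu lam (fun i => (hpos i).le) hsum
  set Φ : (Fin n → ℝ) → X × ℝ := fun μ =>
    (∑ i, μ i • u i, (1 - dist μ lam / ρ) * r + (dist μ lam / ρ) * M') with hΦdef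
  have hΦc : Continuous Φ := by
    refine Continuous.prodMk ?_ ?_
    · exact continuous_finset_sum _ fun i _ => (continuous_apply i).smul continuous_const
    · have hdc : Continuous fun μ : Fin n → ℝ => dist μ lam :=
        Continuous.dist continuous_id continuous_const
      fun_prop
  have hΦlam : Φ lam = (x, r) := by
    simp only [hΦdef, dist_self, zero_div, sub_zero, zero_mul, add_zero, one_mul, hxdef]
  have hmaps : ∀ μ ∈ Λ ∩ Metric.ball lam ρ, Φ μ ∈ E := by
    rintro μ ⟨⟨hμ0, hμ1, hμU⟩, hball⟩
    have hd : dist μ lam < ρ := by rwa [Metric.mem_ball] at hball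
    refine ⟨hμU, ?_⟩
    simp only [hΦdef]
    set b := dist μ lam / ρ with hbdef
    have hb0 : 0 ≤ b := div_nonneg dist_nonneg hρ.le
    have hb1 : b < 1 := (div_lt_one hρ).mpr hd
    by_cases hd0 : dist μ lam = 0
    · have hμlam : μ = lam := by rwa [dist_eq_zero] at hd0
      have hb' : b = 0 := by rw [hbdef, hd0, zero_div]
      rw [hμlam, hb']
      norm_num
      exact hr
    · have hdpos : 0 < dist μ lam := lt_of_le_of_ne dist_nonneg (Ne.symm hd0)
      have hbpos : 0 < b := div_pos hdpos hρ
      set σ : Fin n → ℝ := fun i => lam i + (μ i - lam i) / b with hσdef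
      have hcoord : ∀ i, |μ i - lam i| ≤ dist μ lam := by
        intro i
        have := dist_le_pi_dist μ lam i
        rwa [Real.dist_eq] at this
      have hdb : dist μ lam / b = ρ := by
        rw [hbdef]
        field_simp
      have hσ0 : ∀ i, 0 ≤ σ i := by
        intro i
        have h1 : -(dist μ lam) ≤ μ i - lam i := (abs_le.mp (hcoord i)).1
        have h2 : -(dist μ lam) / b ≤ (μ i - lam i) / b :=
          div_le_div_of_nonneg_right h1 hbpos.le
        rw [neg_div, hdb] at h2
        have := hρle i
        simp only [hσdef]
        linarith
      have hσ1 : ∑ i, σ i = 1 := by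
        simp only [hσdef]
        rw [Finset.sum_add_distrib, ← Finset.sum_div, Finset.sum_sub_distrib, hμ1, hsum]
        norm_num
      have hsplit : ∑ i, μ i • u i = (1 - b) • x + b • (∑ i, σ i • u i) := by
        rw [hxdef, Finset.smul_sum, Finset.smul_sum, ← Finset.sum_add_distrib]
        refine Finset.sum_congr rfl fun i _ => ?_
        rw [smul_smul, smul_smul, ← add_smul]
        congr 1
        simp only [hσdef]
        field_simp
        ring
      rw [hsplit]
      refine le_trans (hconv x (∑ i, σ i • u i) b ⟨hb0, hb1.le⟩) ?_
      have hfσ : f (∑ i, σ i • u i) ≤ (Ms : EReal) :=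
        jensen_max f hbot hconv n u Ms hfui σ hσ0 hσ1
      exact ereal_comb_le (hbot _).ne' (hbot _).ne' hr
        (hfσ.trans (EReal.coe_le_coe_iff.mpr (le_max_right r Ms))) hb0 hb1.le le_rfl
  have h1 : lam ∈ closure (Λ ∩ Metric.ball lam ρ) := by
    rw [mem_closure_iff_nhds] at hden ⊢
    intro s hs
    obtain ⟨y, hy1, hy2⟩ := hden (s ∩ Metric.ball lam ρ)
      (Filter.inter_mem hs (Metric.ball_mem_nhds _ hρ))
    exact ⟨y, hy1.1, hy2, hy1.2⟩
  have h2 : Φ lam ∈ closure (Φ '' (Λ ∩ Metric.ball lam ρ)) :=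
    image_closure_subset_closure_image hΦc (Set.mem_image_of_mem Φ h1)
  have h3 : closure (Φ '' (Λ ∩ Metric.ball lam ρ)) ⊆ closure E := by
    refine closure_mono ?_
    rintro _ ⟨μ, hμ, rfl⟩
    exact hmaps μ hμ
  rw [hΦlam] at h2
  exact h3 h2

end SSDAux

/-- Proposition 3.8: let `f : X → ℝ ∪ {±∞}` be proper, convex and lower
semicontinuous, and `U ⊆ dom f` self-segment-dense in `dom f`.  Then `f = f̄_U`
on `conv(U)`; in particular `inf_{x ∈ U} f(x) = inf_{x ∈ conv(U)} f(x)`. -/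
theorem eq_closure_epi_fn_on_convexHull_of_selfSegmentDense
    {X : Type*} [AddCommGroup X] [Module ℝ X] [TopologicalSpace X]
    [IsTopologicalAddGroup X] [ContinuousSMul ℝ X] [LocallyConvexSpace ℝ X] [T2Space X]
    (f : X → EReal) (hproper : (∃ x, f x < ⊤) ∧ ∀ x, ⊥ < f x)
    (hconv : ∀ x y : X, ∀ t ∈ Set.Icc (0 : ℝ) 1,
      f ((1 - t) • x + t • y) ≤ ((1 - t : ℝ) : EReal) * f x + (t : EReal) * f y)
    (hlsc : LowerSemicontinuous f)
    (U : Set X) (hU : U ⊆ {x | f x < ⊤}) (hdense : {x | f x < ⊤} ⊆ closure U)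
    (hssd : ∀ x ∈ U, ∀ y ∈ U, segment ℝ x y ⊆ closure (segment ℝ x y ∩ U))
    (g : X → EReal)
    (hg : {p : X × ℝ | g p.1 ≤ (p.2 : EReal)} =
      closure {p : X × ℝ | p.1 ∈ U ∧ f p.1 ≤ (p.2 : EReal)}) :
    (∀ x ∈ convexHull ℝ U, g x = f x) ∧
      (⨅ x ∈ U, f x) = ⨅ x ∈ convexHull ℝ U, f x := by
  classical
  have hbot := hproper.2
  set E := {p : X × ℝ | p.1 ∈ U ∧ f p.1 ≤ (p.2 : EReal)} with hEdef
  -- the domain is convex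
  have hdomconv : Convex ℝ {x | f x < ⊤} := by
    intro x hx y hy a b ha hb hab
    simp only [Set.mem_setOf_eq] at hx hy ⊢
    have h1b : a = 1 - b := by linarith
    have hcv := hconv x y b ⟨hb, by linarith⟩
    rw [← h1b] at hcv
    refine lt_of_le_of_lt hcv ?_
    have hx' : (a : EReal) * f x ≠ ⊤ := by
      rw [← EReal.coe_toReal hx.ne (hbot x).ne', ← EReal.coe_mul]
      exact EReal.coe_ne_top _
    have hy' : (b : EReal) * f y ≠ ⊤ := by
      rw [← EReal.coe_toReal hy.ne (hbot y).ne', ← EReal.coe_mul]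
      exact EReal.coe_ne_top _
    exact EReal.add_lt_top hx' hy'
  have hhull : ∀ x ∈ convexHull ℝ U, f x < ⊤ := fun x hx =>
    convexHull_min hU hdomconv hx
  -- the main closure lemma
  have main : ∀ x ∈ convexHull ℝ U, ∀ r : ℝ, f x ≤ (r : EReal) →
      ((x, r) : X × ℝ) ∈ closure E := by
    intro x hx r hr
    rw [mem_convexHull_iff_exists_fintype] at hx
    obtain ⟨ι, hι, w, z, hw0, hw1, hzU, hxeq⟩ := hx
    set tset := Finset.univ.filter (fun i => 0 < w i) with htset
    have hwsum : ∑ i ∈ tset, w i = 1 := by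
      rw [htset, Finset.sum_filter_of_ne (fun i _ hne => lt_of_le_of_ne (hw0 i) (Ne.symm hne))]
      exact hw1
    have hxsum : ∑ i ∈ tset, w i • z i = x := by
      rw [htset, Finset.sum_filter_of_ne]
      · exact hxeq
      · intro i _ hne
        rcases eq_or_lt_of_le (hw0 i) with h | h
        · exact absurd (by rw [← h, zero_smul]) hne
        · exact h
    set n := tset.card with hn
    set e := tset.equivFin with he
    set u : Fin n → X := fun j => z (e.symm j) with hu
    set lam : Fin n → ℝ := fun j => w (e.symm j) with hlam
    have hlampos : ∀ j, 0 < lam j := fun j => (Finset.mem_filter.mp (e.symm j).2).2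
    have hlamsum : ∑ j, lam j = 1 := by
      rw [hlam]
      rw [Fintype.sum_equiv e.symm (fun j => w (e.symm j)) (fun i : tset => w i) (fun j => rfl)]
      rw [Finset.sum_coe_sort tset w]
      exact hwsum
    have hxrep : ∑ j, lam j • u j = x := by
      rw [hlam, hu]
      rw [Fintype.sum_equiv e.symm (fun j => w (e.symm j) • z (e.symm j))
        (fun i : tset => w i • z i) (fun j => rfl)]
      rw [Finset.sum_coe_sort tset (fun i => w i • z i)]
      exact hxsum
    have := SSDAux.core_closure f hbot hconv hU hssd n u
      (fun j => hzU (e.symm j)) lam hlampos hlamsum r (by rwa [hxrep])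
    rwa [hxrep] at this
  -- the epigraph of f is closed
  have hepi : IsClosed {p : X × ℝ | f p.1 ≤ (p.2 : EReal)} := by
    rw [← isOpen_compl_iff, isOpen_iff_mem_nhds]
    rintro ⟨y, s⟩ hys
    simp only [Set.mem_compl_iff, Set.mem_setOf_eq, not_le] at hys
    obtain ⟨c, hc1, hc2⟩ := EReal.exists_between_coe_real hys
    have h1 : ∀ᶠ z in 𝓝 y, (c : EReal) < f z := hlsc y c hc2
    have h2 : Set.Iio c ∈ 𝓝 s := Iio_mem_nhds (EReal.coe_lt_coe_iff.mp hc1)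
    rw [nhds_prod_eq]
    filter_upwards [Filter.prod_mem_prod h1 h2] with p hp
    simp only [Set.mem_compl_iff, Set.mem_setOf_eq, not_le]
    exact lt_trans (EReal.coe_lt_coe_iff.mpr hp.2) hp.1
  -- f ≤ g everywhere
  have hfg : ∀ x, f x ≤ g x := by
    intro x
    have hEsub : closure E ⊆ {p : X × ℝ | f p.1 ≤ (p.2 : EReal)} :=
      closure_minimal (fun p hp => hp.2) hepi
    have key : ∀ r : ℝ, g x ≤ (r : EReal) → f x ≤ (r : EReal) := by
      intro r hgr
      have hmem : ((x, r) : X × ℝ) ∈ {p : X × ℝ | g p.1 ≤ (p.2 : EReal)} := hgr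
      exact hEsub ((Set.ext_iff.mp hg (x, r)).mp hmem)
    by_cases hgt : g x = ⊤
    · rw [hgt]; exact le_top
    by_cases hgb : g x = ⊥
    · exfalso
      have hall : ∀ r : ℝ, f x ≤ (r : EReal) := fun r => key r (hgb ▸ bot_le)
      obtain ⟨c, hc1, hc2⟩ := EReal.exists_between_coe_real (hbot x)
      exact absurd (hall c) (not_le.mpr hc2)
    · have := key (g x).toReal (le_of_eq (EReal.coe_toReal hgt hgb).symm)
      rwa [EReal.coe_toReal hgt hgb] at this
  -- g ≤ f on the convex hull
  have hgf : ∀ x ∈ convexHull ℝ U, g x ≤ f x := by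
    intro x hx
    have hxt : f x < ⊤ := hhull x hx
    have hxb : f x ≠ ⊥ := (hbot x).ne'
    have h1 : ((x, (f x).toReal) : X × ℝ) ∈ closure E :=
      main x hx _ (le_of_eq (EReal.coe_toReal hxt.ne hxb).symm)
    have h2 : g x ≤ ((f x).toReal : EReal) := (Set.ext_iff.mp hg (x, (f x).toReal)).mpr h1
    rwa [EReal.coe_toReal hxt.ne hxb] at h2
  constructor
  · exact fun x hx => le_antisymm (hgf x hx) (hfg x)
  · refine le_antisymm ?_ ?_
    · refine le_iInf₂ fun x hx => ?_
      by_contra hlt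
      push_neg at hlt
      obtain ⟨c, hc1, hc2⟩ := EReal.exists_between_coe_real hlt
      have hxt : f x < ⊤ := hhull x hx
      have hxb : f x ≠ ⊥ := (hbot x).ne'
      have h1 := main x hx (f x).toReal (le_of_eq (EReal.coe_toReal hxt.ne hxb).symm)
      rw [mem_closure_iff_nhds] at h1
      have htRc : (f x).toReal < c := by
        rwa [← EReal.coe_lt_coe_iff, EReal.coe_toReal hxt.ne hxb]
      obtain ⟨⟨y, s⟩, hmem, hyE⟩ := h1 (Set.univ ×ˢ Set.Iio c)
        (prod_mem_nhds Filter.univ_mem (Iio_mem_nhds htRc))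
      have hys : s < c := hmem.2
      have hylt : f y < (c : EReal) := lt_of_le_of_lt hyE.2 (EReal.coe_lt_coe_iff.mpr hys)
      have hyge : (c : EReal) ≤ f y := le_trans hc2.le (iInf₂_le y hyE.1)
      exact absurd hylt (not_lt.mpr hyge)
    · exact le_iInf₂ fun x hx => iInf₂_le x (subset_convexHull ℝ U hx)
end

section
/- Let X be an infinite-dimensional real Hilbert space with closed unit ball B, endowed with the weak topology, let U be the unit sphere, and f : B × B → ℝ, f(x,y) = ⟨x,y⟩. Then inf_{x ∈ U} sup_{y ∈ B} f(x,y) = 1 while sup_{y ∈ B} inf_{x ∈ U} f(x,y) = 0. Hence the minimax equality fails although U is weakly dense in the weakly compact convex set B and f is bilinear and separately weakly continuous in each variable on B. -/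
open scoped RealInnerProductSpace
open Filter Topology Metric Set

section Aux

variable {X : Type*} [NormedAddCommGroup X] [InnerProductSpace ℝ X] [CompleteSpace X]

lemma aux_pairing_flip_inj :
    Function.Injective ((topDualPairing ℝ X).flip) := by
  intro a b hab
  have h := LinearMap.congr_fun hab (InnerProductSpace.toDual ℝ X (a - b))
  simp only [LinearMap.flip_apply, topDualPairing_apply,
    InnerProductSpace.toDual_apply_apply] at h
  have h0 : ⟪a - b, a - b⟫ = 0 := by rw [inner_sub_right, h, sub_self]
  exact sub_eq_zero.mp (inner_self_eq_zero.mp h0)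

lemma aux_exists_orthonormal_seq (hinf : ¬ FiniteDimensional ℝ X) :
    ∃ e : ℕ → X, Orthonormal ℝ e := by
  obtain ⟨w, b, hb⟩ := exists_hilbertBasis ℝ X
  have hw : w.Infinite := by
    intro hfin
    apply hinf
    have hspan := b.dense_span
    rw [hb, Subtype.range_coe] at hspan
    haveI : FiniteDimensional ℝ (Submodule.span ℝ w) :=
      FiniteDimensional.span_of_finite ℝ hfin
    have hclosed : IsClosed ((Submodule.span ℝ w : Submodule ℝ X) : Set X) :=
      Submodule.closed_of_finiteDimensional _
    rw [hclosed.submodule_topologicalClosure_eq] at hspan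
    have : FiniteDimensional ℝ (⊤ : Submodule ℝ X) := hspan ▸ inferInstance
    exact FiniteDimensional.of_injective (Submodule.topEquiv (R := ℝ) (M := X)).symm.toLinearMap
      (Submodule.topEquiv.symm.injective)
  have hon : Orthonormal ℝ ((↑) : w → X) := hb ▸ b.orthonormal
  refine ⟨fun n => (hw.natEmbedding w n : X), hon.comp _ (hw.natEmbedding w).injective⟩

/-- For an orthonormal sequence, inner products with a fixed vector tend to zero. -/
lemma aux_inner_tendsto_zero {e : ℕ → X} (he : Orthonormal ℝ e) (z : X) :
    Tendsto (fun n => ⟪z, e n⟫) atTop (𝓝 0) := by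
  have hsum : Summable fun n => ‖⟪e n, z⟫‖ ^ 2 := he.inner_products_summable z
  have h1 : Tendsto (fun n => ‖⟪e n, z⟫‖ ^ 2) atTop (𝓝 0) := hsum.tendsto_atTop_zero
  have h2 : Tendsto (fun n => ‖⟪e n, z⟫‖) atTop (𝓝 0) := by
    have := (Real.continuous_sqrt.tendsto 0).comp h1
    simpa [Function.comp_def, Real.sqrt_sq_eq_abs] using this
  have h3 : Tendsto (fun n => ⟪e n, z⟫) atTop (𝓝 0) :=
    tendsto_zero_iff_norm_tendsto_zero.mpr h2
  simpa [real_inner_comm] using h3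

end Aux

/-- Example 4.3 -/
theorem minimax_fails_on_dense_sphere
    {X : Type*} [NormedAddCommGroup X] [InnerProductSpace ℝ X] [CompleteSpace X]
    (hinf : ¬ FiniteDimensional ℝ X) :
    (toWeakSpace ℝ X '' {x : X | ‖x‖ ≤ 1} ⊆
        closure (toWeakSpace ℝ X '' {x : X | ‖x‖ = 1})) ∧
      IsCompact (toWeakSpace ℝ X '' {x : X | ‖x‖ ≤ 1}) ∧
      (⨅ x ∈ {x : X | ‖x‖ = 1}, ⨆ y ∈ {y : X | ‖y‖ ≤ 1}, (⟪x, y⟫ : EReal)) = 1 ∧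
      (⨆ y ∈ {y : X | ‖y‖ ≤ 1}, ⨅ x ∈ {x : X | ‖x‖ = 1}, (⟪x, y⟫ : EReal)) = 0 := by
  -- X is nontrivial
  have hnt : Nontrivial X := by
    by_contra h
    rw [not_nontrivial_iff_subsingleton] at h
    exact hinf inferInstance
  obtain ⟨v, hv⟩ := exists_ne (0 : X)
  set x₀ : X := ‖v‖⁻¹ • v with hx₀def
  have hx₀ : ‖x₀‖ = 1 := norm_smul_inv_norm hv
  constructor
  · -- density of the sphere in the ball for the weak topology
    rintro - ⟨x, hx, rfl⟩
    obtain ⟨e, he⟩ := aux_exists_orthonormal_seq hinf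
    have hxle : ‖x‖ ≤ 1 := hx
    set c : ℕ → ℝ := fun n => ⟪x, e n⟫ with hc
    set t : ℕ → ℝ := fun n => -c n + Real.sqrt ((c n) ^ 2 + 1 - ‖x‖ ^ 2) with ht
    have hnonneg : ∀ n, (0:ℝ) ≤ (c n) ^ 2 + 1 - ‖x‖ ^ 2 := by
      intro n
      have : ‖x‖ ^ 2 ≤ 1 := by nlinarith [norm_nonneg x]
      nlinarith [sq_nonneg (c n)]
    have hsphere : ∀ n, ‖x + t n • e n‖ = 1 := by
      intro n
      have hen : ‖e n‖ = 1 := he.1 n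
      have hsq : ‖x + t n • e n‖ ^ 2 = 1 := by
        have hcn : (⟪x, e n⟫ : ℝ) = c n := rfl
        have hs := Real.sq_sqrt (hnonneg n)
        have htn : t n = -c n + Real.sqrt ((c n) ^ 2 + 1 - ‖x‖ ^ 2) := rfl
        rw [@norm_add_sq_real, norm_smul, hen, real_inner_smul_right, hcn,
          Real.norm_eq_abs, mul_one, sq_abs, htn]
        linear_combination hs
      rw [← Real.sqrt_sq (norm_nonneg (x + t n • e n)), hsq, Real.sqrt_one]
    -- bound on t
    have hcb : ∀ n, |c n| ≤ 1 := by
      intro n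
      have h1 := abs_real_inner_le_norm x (e n)
      rw [he.1 n, mul_one] at h1
      exact h1.trans hxle
    have htb : ∀ n, |t n| ≤ 3 := by
      intro n
      have hc1 : |c n| ≤ 1 := hcb n
      have hc2 : (c n) ^ 2 ≤ 1 := by nlinarith [abs_nonneg (c n), sq_abs (c n)]
      have harg : (c n) ^ 2 + 1 - ‖x‖ ^ 2 ≤ 4 := by nlinarith [sq_nonneg ‖x‖]
      have hs : Real.sqrt ((c n) ^ 2 + 1 - ‖x‖ ^ 2) ≤ 2 := by
        calc Real.sqrt ((c n) ^ 2 + 1 - ‖x‖ ^ 2) ≤ Real.sqrt 4 := Real.sqrt_le_sqrt harg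
          _ = 2 := by
            rw [show (4:ℝ) = 2 ^ 2 by norm_num, Real.sqrt_sq (by norm_num : (0:ℝ) ≤ 2)]
      have h0 : (0:ℝ) ≤ Real.sqrt ((c n) ^ 2 + 1 - ‖x‖ ^ 2) := Real.sqrt_nonneg _
      have habs := abs_le.mp hc1
      have htn : t n = -c n + Real.sqrt ((c n) ^ 2 + 1 - ‖x‖ ^ 2) := rfl
      rw [abs_le, htn]
      constructor <;> linarith [habs.1, habs.2]
    -- weak convergence of x + t n • e n to x
    have htend : Tendsto (fun n => toWeakSpace ℝ X (x + t n • e n)) atTop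
        (𝓝 (toWeakSpace ℝ X x)) := by
      refine (WeakBilin.tendsto_iff_forall_eval_tendsto _ aux_pairing_flip_inj).mpr ?_
      intro l
      set z : X := (InnerProductSpace.toDual ℝ X).symm l with hz
      have hl : ∀ u : X, (topDualPairing ℝ X).flip (toWeakSpace ℝ X u) l = ⟪z, u⟫ := by
        intro u
        have : l u = ⟪z, u⟫ := by
          rw [hz]
          conv_lhs => rw [← (InnerProductSpace.toDual ℝ X).apply_symm_apply l]
          rw [InnerProductSpace.toDual_apply_apply]
        exact this
      simp only [hl]
      have hz0 : Tendsto (fun n => ⟪z, e n⟫) atTop (𝓝 0) := aux_inner_tendsto_zero he z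
      have hb : ∀ n, ‖t n * ⟪z, e n⟫‖ ≤ 3 * ‖⟪z, e n⟫‖ := by
        intro n
        rw [norm_mul]
        exact mul_le_mul_of_nonneg_right
          ((Real.norm_eq_abs (t n)).le.trans (htb n)) (norm_nonneg _)
      have hmul : Tendsto (fun n => t n * ⟪z, e n⟫) atTop (𝓝 0) :=
        squeeze_zero_norm hb
          (by simpa using (tendsto_zero_iff_norm_tendsto_zero.mp hz0).const_mul 3)
      have h4 := hmul.const_add (⟪z, x⟫ : ℝ)
      simp only [add_zero] at h4
      convert h4 using 2 with n
      rw [inner_add_right, real_inner_smul_right]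
    refine mem_closure_of_tendsto htend ?_
    filter_upwards with n
    exact ⟨x + t n • e n, hsphere n, rfl⟩
  refine ⟨?_, ?_, ?_⟩
  · -- weak compactness of the ball, via Banach-Alaoglu and the Riesz isometry
    set φ : WeakDual ℝ X → WeakSpace ℝ X :=
      fun f => toWeakSpace ℝ X ((InnerProductSpace.toDual ℝ X).symm f) with hφ
    have hφc : Continuous φ := by
      apply WeakBilin.continuous_of_continuous_eval
      intro l
      set z : X := (InnerProductSpace.toDual ℝ X).symm l with hz
      have key : ∀ f : WeakDual ℝ X, (topDualPairing ℝ X).flip (φ f) l = f z := by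
        intro f
        have h1 : (topDualPairing ℝ X).flip (φ f) l
            = l ((InnerProductSpace.toDual ℝ X).symm f) := rfl
        rw [h1, hz]
        conv_lhs => rw [← (InnerProductSpace.toDual ℝ X).apply_symm_apply l]
        rw [InnerProductSpace.toDual_apply_apply, real_inner_comm,
          ← InnerProductSpace.toDual_apply_apply (𝕜 := ℝ)]
        exact DFunLike.congr_fun
          ((InnerProductSpace.toDual ℝ X).apply_symm_apply (f : StrongDual ℝ X)) _
      simp only [key]
      exact WeakBilin.eval_continuous _ z
    have hK : IsCompact (WeakDual.toStrongDual ⁻¹' closedBall (0 : StrongDual ℝ X) 1) :=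
      WeakDual.isCompact_closedBall 0 1
    have himg : φ '' (WeakDual.toStrongDual ⁻¹' closedBall (0 : StrongDual ℝ X) 1)
        = toWeakSpace ℝ X '' {x : X | ‖x‖ ≤ 1} := by
      ext u
      constructor
      · rintro ⟨f, hf, rfl⟩
        refine ⟨(InnerProductSpace.toDual ℝ X).symm (WeakDual.toStrongDual f), ?_, rfl⟩
        have h1 : ‖WeakDual.toStrongDual f‖ ≤ 1 := by
          simpa [mem_closedBall_zero_iff] using hf
        rw [Set.mem_setOf_eq, (InnerProductSpace.toDual ℝ X).symm.norm_map]
        exact h1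
      · rintro ⟨y, hy, rfl⟩
        refine ⟨(show WeakDual ℝ X from InnerProductSpace.toDual ℝ X y), ?_, ?_⟩
        · show WeakDual.toStrongDual _ ∈ closedBall 0 1
          rw [mem_closedBall_zero_iff]
          have : ‖InnerProductSpace.toDual ℝ X y‖ ≤ 1 := by
            rw [(InnerProductSpace.toDual ℝ X).norm_map]; exact hy
          exact this
        · show toWeakSpace ℝ X ((InnerProductSpace.toDual ℝ X).symm _) = _
          rw [(InnerProductSpace.toDual ℝ X).symm_apply_apply]
    rw [← himg]
    exact hK.image hφc
  · -- inf over the sphere of the sup over the ball equals 1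
    have hsup : ∀ x ∈ {x : X | ‖x‖ = 1},
        (⨆ y ∈ {y : X | ‖y‖ ≤ 1}, (⟪x, y⟫ : EReal)) = 1 := by
      intro x hx
      apply le_antisymm
      · refine iSup₂_le fun y hy => ?_
        have h1 : ⟪x, y⟫ ≤ 1 := by
          calc ⟪x, y⟫ ≤ ‖x‖ * ‖y‖ := real_inner_le_norm x y
            _ = ‖y‖ := by rw [hx, one_mul]
            _ ≤ 1 := hy
        exact_mod_cast EReal.coe_le_coe_iff.mpr h1
      · have hxx : (⟪x, x⟫ : ℝ) = 1 := by
          rw [real_inner_self_eq_norm_sq, hx, one_pow]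
        refine le_iSup₂_of_le x (by simpa [Set.mem_setOf_eq] using le_of_eq hx) ?_
        rw [hxx]; exact le_refl _
    apply le_antisymm
    · refine iInf₂_le_of_le x₀ hx₀ ?_
      rw [hsup x₀ hx₀]
    · refine le_iInf₂ fun x hx => ?_
      rw [hsup x hx]
  · -- sup over the ball of the inf over the sphere equals 0
    apply le_antisymm
    · refine iSup₂_le fun y hy => ?_
      rcases le_or_gt (⟪x₀, y⟫ : ℝ) 0 with h | h
      · refine iInf₂_le_of_le x₀ hx₀ ?_
        exact_mod_cast EReal.coe_le_coe_iff.mpr h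
      · have hx₀' : ‖-x₀‖ = 1 := by rw [norm_neg, hx₀]
        refine iInf₂_le_of_le (-x₀) hx₀' ?_
        have hle : (⟪-x₀, y⟫ : ℝ) ≤ 0 := by rw [inner_neg_left]; linarith
        exact_mod_cast EReal.coe_le_coe_iff.mpr hle
    · have h0 : (0 : X) ∈ {y : X | ‖y‖ ≤ 1} := by simp
      refine le_iSup₂_of_le (0 : X) h0 ?_
      refine le_iInf₂ fun x hx => ?_
      rw [inner_zero_right]
      exact le_of_eq (EReal.coe_zero).symm
end

section
/- Let K be a nonempty compact convex subset of a Hausdorff locally convex topological vector space X, Y a nonempty set, U ⊆ K dense in K, and f : K × Y → ℝ such that (i) x ↦ f(x,y) is convex on K for each y ∈ Y, (ii) y ↦ f(x,y) is concavelike for each x ∈ K, (iii) the family {f(·,y)}_{y∈Y} is equicontinuous on K, and (iv) sup_{y∈Y} f(x,y) < ∞ for every x ∈ K. Then inf_{x∈U} sup_{y∈Y} f(x,y) = sup_{y∈Y} inf_{x∈U} f(x,y). -/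
open scoped Topology

lemma twoFun_minimax {X : Type*} [AddCommGroup X] [Module ℝ X] [TopologicalSpace X]
    [IsTopologicalAddGroup X] [ContinuousSMul ℝ X]
    (K : Set X) (hKconv : Convex ℝ K)
    (f₁ f₂ : X → ℝ) (h₁ : ConvexOn ℝ K f₁) (h₂ : ConvexOn ℝ K f₂)
    (hc₁ : ContinuousOn f₁ K) (hc₂ : ContinuousOn f₂ K)
    (c : ℝ) (hmax : ∀ x ∈ K, c < f₁ x ∨ c < f₂ x) :
    ∃ t ∈ Set.Icc (0:ℝ) 1, ∀ x ∈ K, c ≤ (1 - t) * f₁ x + t * f₂ x := by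
  by_contra hcon
  push_neg at hcon
  -- every t has a witness in the sublevel set
  have hS : ∀ t ∈ Set.Icc (0:ℝ) 1, ∃ x ∈ K, (1 - t) * f₁ x + t * f₂ x < c := by
    intro t ht
    obtain ⟨x, hx, hxc⟩ := hcon t ht
    exact ⟨x, hx, hxc⟩
  set P : ℝ → Prop := fun t => ∀ x ∈ K, (1 - t) * f₁ x + t * f₂ x < c → f₁ x < c with hP
  set Q : ℝ → Prop := fun t => ∀ x ∈ K, (1 - t) * f₁ x + t * f₂ x < c → f₂ x < c with hQ
  -- basic arithmetic: a point in the sublevel set satisfies f₁ < c or f₂ < c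
  have harith : ∀ t ∈ Set.Icc (0:ℝ) 1, ∀ x ∈ K, (1 - t) * f₁ x + t * f₂ x < c →
      f₁ x < c ∨ f₂ x < c := by
    intro t ht x _ hx
    by_contra h
    push_neg at h
    nlinarith [h.1, h.2, ht.1, ht.2]
  -- P and Q cannot both hold
  have hPQ : ∀ t ∈ Set.Icc (0:ℝ) 1, ¬ (P t ∧ Q t) := by
    rintro t ht ⟨hp, hq⟩
    obtain ⟨x, hx, hxc⟩ := hS t ht
    rcases hmax x hx with h | h
    · exact absurd (hp x hx hxc) (not_lt.2 h.le)
    · exact absurd (hq x hx hxc) (not_lt.2 h.le)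
  -- dichotomy via IVT on a segment
  have hdich : ∀ t ∈ Set.Icc (0:ℝ) 1, P t ∨ Q t := by
    intro t ht
    by_contra h
    push_neg at h
    obtain ⟨hnp, hnq⟩ := h
    simp only [hP, hQ] at hnp hnq
    push_neg at hnp hnq
    obtain ⟨xb, hxb, hxbS, hxbf⟩ := hnp   -- c ≤ f₁ xb
    obtain ⟨xa, hxa, hxaS, hxaf⟩ := hnq   -- c ≤ f₂ xa
    have hfa1 : f₁ xa < c := by
      rcases harith t ht xa hxa hxaS with h | h
      · exact h
      · exact absurd h (not_lt.2 hxaf)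
    have hfb2 : f₂ xb < c := by
      rcases harith t ht xb hxb hxbS with h | h
      · exact absurd h (not_lt.2 hxbf)
      · exact h
    -- path from xa to xb
    set γ : ℝ → X := fun s => xa + s • (xb - xa) with hγ
    have hγcomb : ∀ s : ℝ, γ s = (1 - s) • xa + s • xb := by
      intro s
      simp only [hγ, smul_sub, sub_smul, one_smul]
      abel
    have hγK : ∀ s ∈ Set.Icc (0:ℝ) 1, γ s ∈ K := by
      intro s hs
      have h1s : (0:ℝ) ≤ 1 - s := by linarith [hs.2]
      rw [hγcomb]
      exact hKconv hxa hxb h1s hs.1 (by ring)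
    have hγS : ∀ s ∈ Set.Icc (0:ℝ) 1, (1 - t) * f₁ (γ s) + t * f₂ (γ s) < c := by
      intro s hs
      have h1s : (0:ℝ) ≤ 1 - s := by linarith [hs.2]
      have h1t : (0:ℝ) ≤ 1 - t := by linarith [ht.2]
      have e1 : f₁ (γ s) ≤ (1 - s) * f₁ xa + s * f₁ xb := by
        rw [hγcomb]
        have := h₁.2 hxa hxb h1s hs.1 (by ring)
        simpa [smul_eq_mul] using this
      have e2 : f₂ (γ s) ≤ (1 - s) * f₂ xa + s * f₂ xb := by
        rw [hγcomb]
        have := h₂.2 hxa hxb h1s hs.1 (by ring)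
        simpa [smul_eq_mul] using this
      have B1 := mul_le_mul_of_nonneg_left e1 h1t
      have B2 := mul_le_mul_of_nonneg_left e2 ht.1
      have key : ∀ a b : ℝ, a < c → b < c → (1 - s) * a + s * b < c := by
        intro a b ha hb
        rcases lt_or_eq_of_le hs.2 with h | h
        · have k1 := mul_lt_mul_of_pos_left ha (by linarith : (0:ℝ) < 1 - s)
          have k2 := mul_le_mul_of_nonneg_left hb.le hs.1
          nlinarith
        · rw [h]; simpa using hb
      nlinarith [B1, B2, key _ _ hxaS hxbS]
    have hγcont : Continuous γ := by
      simp only [hγ]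
      exact continuous_const.add (continuous_id.smul continuous_const)
    have hφcont : ContinuousOn (fun s => f₁ (γ s)) (Set.Icc (0:ℝ) 1) :=
      hc₁.comp hγcont.continuousOn hγK
    have h0 : f₁ (γ 0) = f₁ xa := by simp [hγ]
    have h1 : f₁ (γ 1) = f₁ xb := by simp [hγ]
    have hivt := intermediate_value_Icc (by norm_num : (0:ℝ) ≤ 1) hφcont
    have hcmem : c ∈ Set.Icc (f₁ (γ 0)) (f₁ (γ 1)) := by
      rw [h0, h1]; exact ⟨hfa1.le, hxbf⟩
    obtain ⟨s, hs, hseq⟩ := hivt hcmem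
    have hseq' : f₁ (γ s) = c := hseq
    have hsS := hγS s hs
    rcases harith t ht (γ s) (hγK s hs) hsS with h | h
    · rw [hseq'] at h; exact lt_irrefl c h
    · rcases hmax (γ s) (hγK s hs) with h' | h'
      · rw [hseq'] at h'; exact lt_irrefl c h'
      · exact absurd h' (not_lt.2 h.le)
  have hP0 : P 0 := by
    intro x _ hx
    simpa using hx
  have hQ1 : Q 1 := by
    intro x _ hx
    simpa using hx
  -- openness of P and Q
  have hopen : ∀ (g : ℝ → Prop), (g = P ∨ g = Q) → ∀ t ∈ Set.Icc (0:ℝ) 1, g t →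
      ∃ δ > 0, ∀ t' ∈ Set.Icc (0:ℝ) 1, |t' - t| < δ → g t' := by
    rintro g hg t ht hgt
    obtain ⟨x₀, hx₀, hx₀S⟩ := hS t ht
    have hpos : 0 < c - ((1 - t) * f₁ x₀ + t * f₂ x₀) := by linarith
    refine ⟨(c - ((1 - t) * f₁ x₀ + t * f₂ x₀)) / (|f₂ x₀ - f₁ x₀| + 1),
      div_pos hpos (by positivity), ?_⟩
    intro t' ht' hd
    have habs : 0 ≤ |f₂ x₀ - f₁ x₀| := abs_nonneg _
    have hx₀S' : (1 - t') * f₁ x₀ + t' * f₂ x₀ < c := by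
      have key : (1 - t') * f₁ x₀ + t' * f₂ x₀
          = ((1 - t) * f₁ x₀ + t * f₂ x₀) + (t' - t) * (f₂ x₀ - f₁ x₀) := by ring
      have hb : (t' - t) * (f₂ x₀ - f₁ x₀) ≤ |t' - t| * |f₂ x₀ - f₁ x₀| := by
        calc (t' - t) * (f₂ x₀ - f₁ x₀) ≤ |(t' - t) * (f₂ x₀ - f₁ x₀)| := le_abs_self _
        _ = |t' - t| * |f₂ x₀ - f₁ x₀| := abs_mul _ _
      have hδ : |t' - t| * (|f₂ x₀ - f₁ x₀| + 1) < c - ((1 - t) * f₁ x₀ + t * f₂ x₀) := by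
        rw [lt_div_iff₀ (by positivity)] at hd
        linarith
      nlinarith [abs_nonneg (t' - t)]
    rcases hg with rfl | rfl
    · -- g = P
      rcases hdich t' ht' with h | h
      · exact h
      · exfalso
        have hf2 := h x₀ hx₀ hx₀S'
        have hf1 := hgt x₀ hx₀ hx₀S
        rcases hmax x₀ hx₀ with h' | h'
        · exact absurd hf1 (not_lt.2 h'.le)
        · exact absurd hf2 (not_lt.2 h'.le)
    · -- g = Q
      rcases hdich t' ht' with h | h
      · exfalso
        have hf1 := h x₀ hx₀ hx₀S'
        have hf2 := hgt x₀ hx₀ hx₀S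
        rcases hmax x₀ hx₀ with h' | h'
        · exact absurd hf1 (not_lt.2 h'.le)
        · exact absurd hf2 (not_lt.2 h'.le)
      · exact h
  -- sup argument
  set T : Set ℝ := {t | t ∈ Set.Icc (0:ℝ) 1 ∧ P t} with hT
  have hTne : T.Nonempty := ⟨0, ⟨⟨le_refl 0, by norm_num⟩, hP0⟩⟩
  have hTbdd : BddAbove T := ⟨1, fun t ht => ht.1.2⟩
  set t₀ : ℝ := sSup T with ht₀
  have ht₀mem : t₀ ∈ Set.Icc (0:ℝ) 1 := by
    constructor
    · exact le_csSup hTbdd ⟨⟨le_refl 0, by norm_num⟩, hP0⟩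
    · exact csSup_le hTne fun t ht => ht.1.2
  rcases hdich t₀ ht₀mem with hPt₀ | hQt₀
  · -- P t₀ : push past t₀, contradiction with sup
    have ht₀lt1 : t₀ < 1 := by
      rcases lt_or_eq_of_le ht₀mem.2 with h | h
      · exact h
      · exfalso; rw [h] at hPt₀; exact hPQ 1 ⟨by norm_num, le_refl 1⟩ ⟨hPt₀, hQ1⟩
    obtain ⟨δ, hδ, hδP⟩ := hopen P (Or.inl rfl) t₀ ht₀mem hPt₀
    set t' : ℝ := min (t₀ + δ / 2) 1 with ht'
    have ht'mem : t' ∈ Set.Icc (0:ℝ) 1 := by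
      constructor
      · exact le_min (by linarith [ht₀mem.1]) (by norm_num)
      · exact min_le_right _ _
    have ht'gt : t₀ < t' := by
      apply lt_min (by linarith) ht₀lt1
    have ht'close : |t' - t₀| < δ := by
      rw [abs_lt]
      constructor
      · linarith
      · have : t' ≤ t₀ + δ / 2 := min_le_left _ _
        linarith
    have : t' ∈ T := ⟨ht'mem, hδP t' ht'mem ht'close⟩
    exact absurd (le_csSup hTbdd this) (not_le.2 ht'gt)
  · -- Q t₀ : find element of T close below t₀
    obtain ⟨δ, hδ, hδQ⟩ := hopen Q (Or.inr rfl) t₀ ht₀mem hQt₀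
    have : ∃ t ∈ T, t₀ - δ < t := by
      rcases exists_lt_of_lt_csSup hTne (show t₀ - δ < sSup T by linarith) with ⟨t, htT, hlt⟩
      exact ⟨t, htT, hlt⟩
    obtain ⟨t, htT, hlt⟩ := this
    have htle : t ≤ t₀ := le_csSup hTbdd htT
    have hclose : |t - t₀| < δ := by rw [abs_lt]; constructor <;> linarith
    exact hPQ t htT.1 ⟨htT.2, hδQ t htT.1 hclose⟩


lemma finset_minimax {X : Type*} [AddCommGroup X] [Module ℝ X] [TopologicalSpace X]
    [IsTopologicalAddGroup X] [ContinuousSMul ℝ X] [T2Space X]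
    {Y : Type*} [Nonempty Y]
    (K : Set X) (f : X → Y → ℝ)
    (hconv : ∀ y : Y, ConvexOn ℝ K (fun x => f x y))
    (hcont : ∀ y : Y, ContinuousOn (fun x => f x y) K)
    (hconc : ∀ y₁ y₂ : Y, ∀ t ∈ Set.Icc (0 : ℝ) 1, ∃ y₃ : Y,
      ∀ x ∈ K, (1 - t) * f x y₁ + t * f x y₂ ≤ f x y₃)
    (c : ℝ) (s : Finset Y) :
    ∀ (K' : Set X), IsCompact K' → Convex ℝ K' → K' ⊆ K →
      (∀ x ∈ K', ∃ y ∈ s, c < f x y) → ∀ ε > (0:ℝ), ∃ y₀ : Y, ∀ x ∈ K', c - ε ≤ f x y₀ := by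
  classical
  induction s using Finset.induction_on with
  | empty =>
    intro K' _ _ _ hhyp ε hε
    refine ⟨Classical.arbitrary Y, fun x hx => ?_⟩
    obtain ⟨y, hy, -⟩ := hhyp x hx
    exact absurd hy (Finset.notMem_empty y)
  | @insert a s' ha ih =>
    intro K' hK'cpt hK'conv hK'K hhyp ε hε
    by_cases hall : ∀ x ∈ K', c < f x a
    · exact ⟨a, fun x hx => by linarith [hall x hx]⟩
    · push_neg at hall
      set K'' : Set X := K' ∩ (fun x => f x a) ⁻¹' Set.Iic c with hK''
      have hK''closed : IsClosed K'' :=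
        ((hcont a).mono hK'K).preimage_isClosed_of_isClosed hK'cpt.isClosed isClosed_Iic
      have hK''cpt : IsCompact K'' :=
        IsCompact.of_isClosed_subset hK'cpt hK''closed Set.inter_subset_left
      have hK''conv : Convex ℝ K'' := by
        have h := ((hconv a).subset hK'K hK'conv).convex_le c
        convert h using 1
        rfl
      have hK''K : K'' ⊆ K := fun x hx => hK'K hx.1
      have hhyp'' : ∀ x ∈ K'', ∃ y ∈ s', c < f x y := by
        intro x hx
        obtain ⟨y, hy, hcy⟩ := hhyp x hx.1
        rcases Finset.mem_insert.1 hy with rfl | hy'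
        · exact absurd hcy (not_lt.2 hx.2)
        · exact ⟨y, hy', hcy⟩
      obtain ⟨y', hy'⟩ := ih K'' hK''cpt hK''conv hK''K hhyp'' (ε/2) (by linarith)
      have hmax : ∀ x ∈ K', c - ε < f x y' ∨ c - ε < f x a := by
        intro x hx
        by_cases hxa : f x a ≤ c
        · exact Or.inl (by linarith [hy' x ⟨hx, hxa⟩])
        · exact Or.inr (by push_neg at hxa; linarith)
      obtain ⟨t, ht, htineq⟩ := twoFun_minimax K' hK'conv (fun x => f x y') (fun x => f x a)
        ((hconv y').subset hK'K hK'conv) ((hconv a).subset hK'K hK'conv)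
        ((hcont y').mono hK'K) ((hcont a).mono hK'K) (c - ε) hmax
      obtain ⟨y₃, hy₃⟩ := hconc y' a t ht
      exact ⟨y₃, fun x hx => le_trans (htineq x hx) (hy₃ x (hK'K hx))⟩

/-- Theorem 4.8: let `K` be a nonempty compact convex subset of a Hausdorff locally
convex topological vector space, `Y` a nonempty set, `U ⊆ K` dense in `K`, and
`f : K × Y → ℝ` with `x ↦ f(x,y)` convex on `K` for each `y`, `y ↦ f(x,y)`
concavelike, the family `{f(·,y)}_{y∈Y}` equicontinuous on `K`, and
`sup_{y∈Y} f(x,y) < ∞` for every `x ∈ K`.  Then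
`inf_{x∈U} sup_{y∈Y} f(x,y) = sup_{y∈Y} inf_{x∈U} f(x,y)`. -/
theorem minimax_dense_of_equicontinuous
    {X : Type*} [AddCommGroup X] [Module ℝ X] [TopologicalSpace X]
    [IsTopologicalAddGroup X] [ContinuousSMul ℝ X] [LocallyConvexSpace ℝ X] [T2Space X]
    (K : Set X) (hKcpt : IsCompact K) (hKconv : Convex ℝ K) (hKne : K.Nonempty)
    {Y : Type*} [Nonempty Y]
    (U : Set X) (hUK : U ⊆ K) (hdense : K ⊆ closure U)
    (f : X → Y → ℝ)
    (hconv : ∀ y : Y, ConvexOn ℝ K (fun x => f x y))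
    (hconc : ∀ y₁ y₂ : Y, ∀ t ∈ Set.Icc (0 : ℝ) 1, ∃ y₃ : Y,
      ∀ x ∈ K, (1 - t) * f x y₁ + t * f x y₂ ≤ f x y₃)
    (hequi : ∀ x ∈ K, ∀ ε > (0 : ℝ), ∃ V ∈ 𝓝 x, ∀ z ∈ V ∩ K, ∀ y : Y,
      |f z y - f x y| < ε)
    (hbdd : ∀ x ∈ K, BddAbove (Set.range fun y : Y => f x y)) :
    (⨅ x ∈ U, ⨆ y : Y, (f x y : EReal)) = ⨆ y : Y, ⨅ x ∈ U, (f x y : EReal) := by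
  -- continuity of each slice
  have hcont : ∀ y : Y, ContinuousOn (fun x => f x y) K := by
    intro y x hx
    rw [ContinuousWithinAt, Metric.tendsto_nhds]
    intro ε hε
    obtain ⟨V, hV, hVε⟩ := hequi x hx ε hε
    filter_upwards [nhdsWithin_le_nhds hV, self_mem_nhdsWithin] with z hzV hzK
    rw [Real.dist_eq]
    exact hVε z ⟨hzV, hzK⟩ y
  -- the sup function
  set g : X → ℝ := fun x => ⨆ y : Y, f x y with hg
  have hfleg : ∀ x ∈ K, ∀ y : Y, f x y ≤ g x := fun x hx y => le_ciSup (hbdd x hx) y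
  have hgcont : ContinuousOn g K := by
    intro x hx
    rw [ContinuousWithinAt, Metric.tendsto_nhds]
    intro ε hε
    obtain ⟨V, hV, hVε⟩ := hequi x hx (ε/2) (by linarith)
    filter_upwards [nhdsWithin_le_nhds hV, self_mem_nhdsWithin] with z hzV hzK
    have h1 : g z ≤ g x + ε/2 := by
      refine ciSup_le fun y => ?_
      have := hVε z ⟨hzV, hzK⟩ y
      have := abs_lt.1 this
      linarith [hfleg x hx y]
    have h2 : g x ≤ g z + ε/2 := by
      refine ciSup_le fun y => ?_
      have := hVε z ⟨hzV, hzK⟩ y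
      have := abs_lt.1 this
      linarith [hfleg z hzK y]
    rw [Real.dist_eq, abs_lt]
    constructor <;> linarith
  refine le_antisymm ?_ ?_
  · -- hard direction
    refine le_of_forall_lt_imp_le_of_dense fun c hc => ?_
    obtain ⟨r, hcr, hrα⟩ := EReal.exists_between_coe_real hc
    refine le_trans hcr.le ?_
    -- key: for each ε > 0 there is y₀ with f x y₀ ≥ r - ε on U
    have key : ∀ ε > (0:ℝ), ∃ y₀ : Y, ∀ x ∈ U, r - ε ≤ f x y₀ := by
      intro ε hε
      have hgU : ∀ x ∈ U, r < g x := by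
        intro x hx
        have h1 : (r : EReal) < ⨆ y : Y, (f x y : EReal) :=
          lt_of_lt_of_le hrα (iInf₂_le x hx)
        obtain ⟨y, hy⟩ := lt_iSup_iff.1 h1
        exact lt_of_lt_of_le (EReal.coe_lt_coe_iff.1 hy) (hfleg x (hUK hx) y)
      have hgK : ∀ x ∈ K, r ≤ g x := by
        have hCclosed : IsClosed (K ∩ g ⁻¹' Set.Ici r) :=
          hgcont.preimage_isClosed_of_isClosed hKcpt.isClosed isClosed_Ici
        have hUC : U ⊆ K ∩ g ⁻¹' Set.Ici r := fun x hx => ⟨hUK hx, (hgU x hx).le⟩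
        intro x hx
        have : x ∈ K ∩ g ⁻¹' Set.Ici r :=
          hCclosed.closure_subset ((closure_mono hUC) (hdense hx))
        exact this.2
      -- compactness: finitely many y suffice to exceed r - ε/2
      set Z : Y → Set X := fun y => K ∩ (fun x => f x y) ⁻¹' Set.Iic (r - ε/2) with hZ
      have hZclosed : ∀ y, IsClosed (Z y) := fun y =>
        (hcont y).preimage_isClosed_of_isClosed hKcpt.isClosed isClosed_Iic
      have hinter : K ∩ ⋂ y : Y, Z y = ∅ := by
        rw [Set.eq_empty_iff_forall_notMem]
        rintro x ⟨hxK, hxZ⟩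
        have hlt : r - ε/2 < g x := by linarith [hgK x hxK]
        obtain ⟨y, hy⟩ := exists_lt_of_lt_ciSup hlt
        have := (Set.mem_iInter.1 hxZ y).2
        simp only [Set.mem_preimage, Set.mem_Iic] at this
        linarith
      obtain ⟨t, ht⟩ := hKcpt.elim_finite_subfamily_closed Z hZclosed hinter
      have hfin : ∀ x ∈ K, ∃ y ∈ t, r - ε/2 < f x y := by
        intro x hx
        by_contra h
        push_neg at h
        have : x ∈ K ∩ ⋂ y ∈ t, Z y := by
          refine ⟨hx, Set.mem_iInter₂.2 fun y hy => ⟨hx, ?_⟩⟩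
          simp only [Set.mem_preimage, Set.mem_Iic]
          exact h y hy
        rw [ht] at this
        exact this
      obtain ⟨y₀, hy₀⟩ := finset_minimax K f hconv hcont hconc (r - ε/2) t K hKcpt hKconv
        (le_refl K) hfin (ε/2) (by linarith)
      exact ⟨y₀, fun x hx => by linarith [hy₀ x (hUK hx)]⟩
    -- conclude r ≤ RHS
    by_contra hlt
    push_neg at hlt
    obtain ⟨s, hs1, hs2⟩ := EReal.exists_between_coe_real hlt
    obtain ⟨y₀, hy₀⟩ := key (r - s) (by exact_mod_cast sub_pos.2 (EReal.coe_lt_coe_iff.1 hs2))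
    have : (s : EReal) ≤ ⨆ y : Y, ⨅ x ∈ U, (f x y : EReal) := by
      refine le_trans ?_ (le_iSup (fun y => ⨅ x ∈ U, (f x y : EReal)) y₀)
      refine le_iInf₂ fun x hx => ?_
      have := hy₀ x hx
      exact_mod_cast (by linarith : s ≤ f x y₀)
    exact absurd this (not_le.2 hs1)
  · -- easy direction
    refine iSup_le fun y => le_iInf₂ fun x hx => ?_
    exact le_trans (iInf₂_le x hx) (le_iSup (fun y' => (f x y' : EReal)) y)
end
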